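/- arXiv:math/0612513 — 2 statements merged into one kernel-verified Lean document; each statement's English description precedes it below -/
import Mathlib

section
/- Let S = (P, L) be a generalized quadrangle of order (2,2) and let (R, ψ) be a faithful representation of S. Then |R| = 2^4 if and only if r_a r_b r_c = 1 for every complete 3-arc {a,b,c} of S. -/
open scoped Classical

/-- A slim partial linear space: a nonempty point set, a nonempty collection of
lines each of which is a 3-element set of points, such that any two distinct
points lie in at most one common line. -/
structure SlimPLS (P : Type*) where
  lines : Set (Finset P)
  nonempty_pts : Nonempty P
  nonempty_lines : lines.Nonempty
  three_points : ∀ l ∈ lines, l.card = 3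
  unique_line : ∀ l₁ ∈ lines, ∀ l₂ ∈ lines, ∀ x y : P,
    x ≠ y → x ∈ l₁ → y ∈ l₁ → x ∈ l₂ → y ∈ l₂ → l₁ = l₂

namespace SlimPLS

variable {P : Type*}

/-- Two points are collinear if they are distinct and lie on a common line. -/
def Collinear (S : SlimPLS P) (x y : P) : Prop :=
  x ≠ y ∧ ∃ l ∈ S.lines, x ∈ l ∧ y ∈ l

/-- The collinearity graph of a slim partial linear space. -/
def graph (S : SlimPLS P) : SimpleGraph P where
  Adj x y := S.Collinear x y
  symm := ⟨fun x y h => ⟨Ne.symm h.1, h.2.elim fun l hl => ⟨l, hl.1, hl.2.2, hl.2.1⟩⟩⟩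
  loopless := ⟨fun x h => h.1 rfl⟩

/-- `S` is a generalized quadrangle of order `(2, t)`: it is connected, no point
is collinear with all other points, every point is on exactly `t+1` lines, and
for every point `x` and line `l` with `x ∉ l` there is exactly one point of `l`
collinear with `x`. -/
def IsGQ (S : SlimPLS P) (t : ℕ) : Prop :=
  S.graph.Connected ∧
  (∀ x : P, ∃ y : P, y ≠ x ∧ ¬ S.Collinear x y) ∧
  (∀ x : P, {l | l ∈ S.lines ∧ x ∈ l}.ncard = t + 1) ∧
  (∀ x : P, ∀ l ∈ S.lines, x ∉ l → ∃! y : P, y ∈ l ∧ S.Collinear x y)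

/-- A set of points is an arc if its points are pairwise non-collinear. -/
def IsArc (S : SlimPLS P) (T : Set P) : Prop :=
  ∀ x ∈ T, ∀ y ∈ T, x ≠ y → ¬ S.Collinear x y

/-- `{a,b,c}` is a complete 3-arc: three pairwise distinct, pairwise
non-collinear points not contained in a 4-arc. -/
def Complete3Arc (S : SlimPLS P) (a b c : P) : Prop :=
  a ≠ b ∧ a ≠ c ∧ b ≠ c ∧ S.IsArc {a, b, c} ∧
  ∀ d : P, d ∉ ({a, b, c} : Set P) → ¬ S.IsArc (insert d {a, b, c})

/-- `{a,b,c}` is a complete 3-arc of the subset `Q`: three pairwise distinct,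
pairwise non-collinear points of `Q` not contained in a 4-arc inside `Q`. -/
def Complete3ArcIn (S : SlimPLS P) (Q : Set P) (a b c : P) : Prop :=
  a ∈ Q ∧ b ∈ Q ∧ c ∈ Q ∧ a ≠ b ∧ a ≠ c ∧ b ≠ c ∧ S.IsArc {a, b, c} ∧
  ∀ d ∈ Q, d ∉ ({a, b, c} : Set P) → ¬ S.IsArc (insert d {a, b, c})

/-- `Q` is a sub-generalized-quadrangle of order `(2,t)` of `S`: together with
the lines of `S` contained in it, `Q` is a `(2,t)`-GQ; in particular any line
meeting `Q` in at least two points is contained in `Q`. -/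
def IsSubGQ (S : SlimPLS P) (Q : Set P) (t : ℕ) : Prop :=
  Q.Nonempty ∧
  (∃ l ∈ S.lines, (l : Set P) ⊆ Q) ∧
  (∀ l ∈ S.lines, ∀ x ∈ l, ∀ y ∈ l, x ≠ y → x ∈ Q → y ∈ Q → (l : Set P) ⊆ Q) ∧
  (SimpleGraph.induce Q S.graph).Connected ∧
  (∀ x ∈ Q, ∃ y ∈ Q, y ≠ x ∧ ¬ S.Collinear x y) ∧
  (∀ x ∈ Q, {l | l ∈ S.lines ∧ x ∈ l ∧ (l : Set P) ⊆ Q}.ncard = t + 1) ∧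
  (∀ x ∈ Q, ∀ l ∈ S.lines, (l : Set P) ⊆ Q → x ∉ l → ∃! y : P, y ∈ l ∧ S.Collinear x y)

/-- `S` is a near hexagon: connected of diameter 3, no point collinear with all
other points, and for every point `x` and line `l` there is a unique point of
`l` nearest to `x`. -/
def IsNearHexagon (S : SlimPLS P) : Prop :=
  S.graph.Connected ∧
  (∀ x y : P, S.graph.dist x y ≤ 3) ∧
  (∃ x y : P, S.graph.dist x y = 3) ∧
  (∀ x : P, ∃ y : P, y ≠ x ∧ ¬ S.Collinear x y) ∧
  (∀ x : P, ∀ l ∈ S.lines, ∃! y : P, y ∈ l ∧ ∀ z ∈ l, S.graph.dist x y ≤ S.graph.dist x z)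

/-- `S` is dense: any two points at distance 2 have at least two common
neighbours. -/
def IsDense (S : SlimPLS P) : Prop :=
  ∀ x y : P, S.graph.dist x y = 2 →
    ∃ u v : P, u ≠ v ∧ S.Collinear x u ∧ S.Collinear u y ∧ S.Collinear x v ∧ S.Collinear v y

/-- `Q` is a quad: a convex subset of diameter 2 in which no point is collinear
with all other points of `Q`. -/
def IsQuad (S : SlimPLS P) (Q : Set P) : Prop :=
  (∀ u ∈ Q, ∀ v ∈ Q, ∀ w : P,
      S.graph.dist u w + S.graph.dist w v = S.graph.dist u v → w ∈ Q) ∧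
  (∀ u ∈ Q, ∀ v ∈ Q, S.graph.dist u v ≤ 2) ∧
  (∃ u ∈ Q, ∃ v ∈ Q, S.graph.dist u v = 2) ∧
  (∀ u ∈ Q, ∃ v ∈ Q, v ≠ u ∧ ¬ S.Collinear u v)

/-- A quad `Q` is of type `(2, t₂)` if every point of `Q` lies on exactly
`t₂ + 1` lines contained in `Q`. -/
def QuadType (S : SlimPLS P) (Q : Set P) (t₂ : ℕ) : Prop :=
  ∀ x ∈ Q, {l | l ∈ S.lines ∧ x ∈ l ∧ (l : Set P) ⊆ Q}.ncard = t₂ + 1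

/-- The point-quad pair `(x, Q)` is classical: there is a unique point `y ∈ Q`
nearest to `x`, with `d(x,z) = d(x,y) + d(y,z)` for all `z ∈ Q`. -/
def IsClassicalPair (S : SlimPLS P) (x : P) (Q : Set P) : Prop :=
  ∃! y : P, y ∈ Q ∧ ∀ z ∈ Q, S.graph.dist x z = S.graph.dist x y + S.graph.dist y z

/-- A quad is classical (big) if every point-quad pair with it is classical. -/
def IsClassicalQuad (S : SlimPLS P) (Q : Set P) : Prop :=
  ∀ x : P, S.IsClassicalPair x Q

/-- A subspace: any line containing two of its points is contained in it. -/
def IsSubspace (S : SlimPLS P) (X : Set P) : Prop :=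
  ∀ l ∈ S.lines, ∀ x ∈ l, ∀ y ∈ l, x ≠ y → x ∈ X → y ∈ X → (l : Set P) ⊆ X

/-- The subspace generated by a set of points. -/
def subspaceGen (S : SlimPLS P) (A : Set P) : Set P :=
  ⋂₀ {X | S.IsSubspace X ∧ A ⊆ X}

/-- `NPdim S` is the rank over `F₂` of the distance-3 adjacency matrix. -/
noncomputable def NPdim [Fintype P] (S : SlimPLS P) : ℕ :=
  Matrix.rank (Matrix.of fun x y : P => if S.graph.dist x y = 3 then (1 : ZMod 2) else 0)

/-- `dimV S` is the dimension of the universal representation module of `S`: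
the free `F₂`-vector space on the points modulo the span of the elements
`v_x + v_y + v_z` for the lines `{x,y,z}`. -/
noncomputable def dimV (S : SlimPLS P) : ℕ :=
  Module.finrank (ZMod 2)
    ((P →₀ ZMod 2) ⧸ Submodule.span (ZMod 2)
      {f : P →₀ ZMod 2 | ∃ l ∈ S.lines, f = ∑ x ∈ l, Finsupp.single x 1})

end SlimPLS

/-- A representation of a slim partial linear space `S`: an assignment of an
order-2 element `r x` of `R` to each point `x`, such that the images generate
`R` and for every line `{x,y,z}` the set `{1, r x, r y, r z}` is a Klein four
subgroup (`r x * r y = r z` for the three pairwise distinct points of a line). -/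
structure SlimPLS.Rep {P : Type*} (S : SlimPLS P) (R : Type*) [Group R] where
  r : P → R
  order_two : ∀ x : P, orderOf (r x) = 2
  gen : Subgroup.closure (Set.range r) = ⊤
  line_rel : ∀ l ∈ S.lines, ∀ x ∈ l, ∀ y ∈ l, ∀ z ∈ l,
    x ≠ y → x ≠ z → y ≠ z → r x * r y = r z

/-- A finite 2-group is extraspecial if its Frattini subgroup, commutator
subgroup and center coincide and have order 2. -/
def IsExtraspecial (G : Type*) [Group G] : Prop :=
  Finite G ∧ IsPGroup 2 G ∧ frattini G = commutator G ∧
    commutator G = Subgroup.center G ∧ Nat.card (Subgroup.center G) = 2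

namespace SlimPLS

section Lemmas

variable {P : Type*} {S : SlimPLS P}

lemma Collinear.ne {x y : P} (h : S.Collinear x y) : x ≠ y := h.1

lemma Collinear.symm' {x y : P} (h : S.Collinear x y) : S.Collinear y x :=
  ⟨h.1.symm, h.2.imp fun l hl => ⟨hl.1, hl.2.2, hl.2.1⟩⟩

lemma ncol_symm {x y : P} (h : ¬ S.Collinear x y) : ¬ S.Collinear y x :=
  fun hc => h hc.symm'

lemma collinear_mem {l : Finset P} (hl : l ∈ S.lines) {x y : P}
    (hx : x ∈ l) (hy : y ∈ l) (hxy : x ≠ y) : S.Collinear x y :=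
  ⟨hxy, l, hl, hx, hy⟩

lemma line_eq {l₁ l₂ : Finset P} (h1 : l₁ ∈ S.lines) (h2 : l₂ ∈ S.lines)
    {x y : P} (hxy : x ≠ y) (hx1 : x ∈ l₁) (hy1 : y ∈ l₁) (hx2 : x ∈ l₂) (hy2 : y ∈ l₂) :
    l₁ = l₂ :=
  S.unique_line l₁ h1 l₂ h2 x y hxy hx1 hy1 hx2 hy2

lemma exists_two_others {l : Finset P} (hl : l ∈ S.lines) {x : P} (hx : x ∈ l) :
    ∃ y z : P, y ∈ l ∧ z ∈ l ∧ x ≠ y ∧ x ≠ z ∧ y ≠ z ∧ ∀ w ∈ l, w = x ∨ w = y ∨ w = z := by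
  classical
  have hcard := S.three_points l hl
  obtain ⟨a, b, c, hab, hac, hbc, rfl⟩ := Finset.card_eq_three.mp hcard
  simp only [Finset.mem_insert, Finset.mem_singleton] at hx
  rcases hx with rfl | rfl | rfl
  · exact ⟨b, c, by simp, by simp, hab, hac, hbc,
      fun w hw => by simpa using hw⟩
  · exact ⟨a, c, by simp, by simp, hab.symm, hbc, hac,
      fun w hw => by simp only [Finset.mem_insert, Finset.mem_singleton] at hw; tauto⟩
  · exact ⟨a, b, by simp, by simp, hac.symm, hbc.symm, hab,
      fun w hw => by simp only [Finset.mem_insert, Finset.mem_singleton] at hw; tauto⟩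

lemma third_point {x y : P} (h : S.Collinear x y) :
    ∃ z l, l ∈ S.lines ∧ x ∈ l ∧ y ∈ l ∧ z ∈ l ∧ z ≠ x ∧ z ≠ y ∧
      ∀ w ∈ l, w = x ∨ w = y ∨ w = z := by
  obtain ⟨hxy, l, hl, hx, hy⟩ := h
  obtain ⟨u, v, hu, hv, hxu, hxv, huv, hcov⟩ := exists_two_others hl hx
  rcases hcov y hy with rfl | rfl | rfl
  · exact absurd rfl hxy
  · exact ⟨v, l, hl, hx, hy, hv, hxv.symm, huv.symm, fun w hw => by rcases hcov w hw with h|h|h <;> tauto⟩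
  · exact ⟨u, l, hl, hx, hy, hu, hxu.symm, huv, fun w hw => by rcases hcov w hw with h|h|h <;> tauto⟩

variable (hGQ : S.IsGQ 2)
include hGQ

lemma unique_col {x : P} {l : Finset P} (hl : l ∈ S.lines) (hx : x ∉ l) :
    ∃! y, y ∈ l ∧ S.Collinear x y := hGQ.2.2.2 x l hl hx

lemma exists_col {x : P} {l : Finset P} (hl : l ∈ S.lines) (hx : x ∉ l) :
    ∃ y ∈ l, S.Collinear x y := by
  obtain ⟨y, hy, -⟩ := unique_col hGQ hl hx
  exact ⟨y, hy.1, hy.2⟩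

lemma col_eq {x : P} {l : Finset P} (hl : l ∈ S.lines) (hx : x ∉ l) {y z : P}
    (hy : y ∈ l) (hcy : S.Collinear x y) (hz : z ∈ l) (hcz : S.Collinear x z) : y = z := by
  obtain ⟨w, -, hu⟩ := unique_col hGQ hl hx
  rw [hu y ⟨hy, hcy⟩, hu z ⟨hz, hcz⟩]

lemma ncol_of_other {x : P} {l : Finset P} (hl : l ∈ S.lines) (hx : x ∉ l) {z y : P}
    (hz : z ∈ l) (hcz : S.Collinear x z) (hy : y ∈ l) (hyz : y ≠ z) :
    ¬ S.Collinear x y :=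
  fun hc => hyz (col_eq hGQ hl hx hy hc hz hcz)

lemma three_lines (x : P) :
    ∃ l1 l2 l3 : Finset P, l1 ∈ S.lines ∧ l2 ∈ S.lines ∧ l3 ∈ S.lines ∧
      x ∈ l1 ∧ x ∈ l2 ∧ x ∈ l3 ∧ l1 ≠ l2 ∧ l1 ≠ l3 ∧ l2 ≠ l3 ∧
      ∀ l ∈ S.lines, x ∈ l → l = l1 ∨ l = l2 ∨ l = l3 := by
  have h := hGQ.2.2.1 x
  obtain ⟨l1, l2, l3, h12, h13, h23, hset⟩ := Set.ncard_eq_three.mp h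
  have m1 : l1 ∈ {l | l ∈ S.lines ∧ x ∈ l} := by rw [hset]; simp
  have m2 : l2 ∈ {l | l ∈ S.lines ∧ x ∈ l} := by rw [hset]; simp
  have m3 : l3 ∈ {l | l ∈ S.lines ∧ x ∈ l} := by rw [hset]; simp
  refine ⟨l1, l2, l3, m1.1, m2.1, m3.1, m1.2, m2.2, m3.2, h12, h13, h23, fun l hl hx => ?_⟩
  have : l ∈ {l | l ∈ S.lines ∧ x ∈ l} := ⟨hl, hx⟩
  rw [hset] at this
  simpa using this

lemma lines_cover {x : P} {n1 n2 n3 : Finset P} (hn1 : n1 ∈ S.lines) (hn2 : n2 ∈ S.lines)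
    (hn3 : n3 ∈ S.lines) (hx1 : x ∈ n1) (hx2 : x ∈ n2) (hx3 : x ∈ n3)
    (h12 : n1 ≠ n2) (h13 : n1 ≠ n3) (h23 : n2 ≠ n3) :
    ∀ l ∈ S.lines, x ∈ l → l = n1 ∨ l = n2 ∨ l = n3 := by
  obtain ⟨l1, l2, l3, -, -, -, -, -, -, -, -, -, hcov⟩ := three_lines hGQ x
  intro l hl hx
  have e1 := hcov n1 hn1 hx1
  have e2 := hcov n2 hn2 hx2
  have e3 := hcov n3 hn3 hx3
  have el := hcov l hl hx
  rcases e1 with rfl|rfl|rfl <;> rcases e2 with rfl|rfl|rfl <;>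
    rcases e3 with rfl|rfl|rfl <;> tauto

end Lemmas

end SlimPLS
namespace SlimPLS

section Lemmas2

variable {P : Type*} {S : SlimPLS P} (hGQ : S.IsGQ 2)
include hGQ

lemma other_two_lines {x : P} {l : Finset P} (hl : l ∈ S.lines) (hx : x ∈ l) :
    ∃ m1 m2 : Finset P, m1 ∈ S.lines ∧ m2 ∈ S.lines ∧ x ∈ m1 ∧ x ∈ m2 ∧
      m1 ≠ m2 ∧ m1 ≠ l ∧ m2 ≠ l ∧ ∀ n ∈ S.lines, x ∈ n → n = l ∨ n = m1 ∨ n = m2 := by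
  obtain ⟨l1, l2, l3, hl1, hl2, hl3, hx1, hx2, hx3, h12, h13, h23, hcov⟩ := three_lines hGQ x
  rcases hcov l hl hx with rfl | rfl | rfl
  · exact ⟨l2, l3, hl2, hl3, hx2, hx3, h23, h12.symm, h13.symm,
      fun n hn hxn => by rcases hcov n hn hxn with h|h|h <;> tauto⟩
  · exact ⟨l1, l3, hl1, hl3, hx1, hx3, h13, h12, h23.symm,
      fun n hn hxn => by rcases hcov n hn hxn with h|h|h <;> tauto⟩
  · exact ⟨l1, l2, hl1, hl2, hx1, hx2, h12, h13, h23,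
      fun n hn hxn => by rcases hcov n hn hxn with h|h|h <;> tauto⟩

lemma off_point {a b : P} (hab : ¬ S.Collinear a b) (hne : a ≠ b) {l : Finset P}
    (hl : l ∈ S.lines) (hbl : b ∈ l) :
    ∃ h ∈ l, h ≠ b ∧ ¬ S.Collinear a h ∧ ∀ w ∈ l, w ≠ b → ¬ S.Collinear a w → w = h := by
  have hal : a ∉ l := fun h => hab ⟨hne, l, hl, h, hbl⟩
  obtain ⟨s, t, hs, ht, hbs, hbt, hst, hcov⟩ := exists_two_others hl hbl
  obtain ⟨q, hq, hcq⟩ := exists_col hGQ hl hal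
  have hqb : q ≠ b := fun h => hab (h ▸ hcq)
  have key : ∀ u v : P, u ∈ l → v ∈ l → q = u → v ≠ u → v ≠ b →
      (∀ w ∈ l, w = b ∨ w = u ∨ w = v) →
      ∃ h ∈ l, h ≠ b ∧ ¬ S.Collinear a h ∧ ∀ w ∈ l, w ≠ b → ¬ S.Collinear a w → w = h := by
    intro u v hu hv hqu hvu hvb hc
    subst hqu
    refine ⟨v, hv, hvb, ncol_of_other hGQ hl hal hq hcq hv hvu, fun w hw hwb hwa => ?_⟩
    rcases hc w hw with rfl | rfl | rfl
    · exact absurd rfl hwb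
    · exact absurd hcq hwa
    · rfl
  rcases hcov q hq with h | h | h
  · exact absurd h hqb
  · exact key s t hs ht h hst.symm hbt.symm hcov
  · exact key t s ht hs h hst hbs.symm
      (fun w hw => by rcases hcov w hw with h|h|h <;> tauto)

end Lemmas2

end SlimPLS
namespace SlimPLS

section Enum

variable {P : Type*} {S : SlimPLS P} (hGQ : S.IsGQ 2)
include hGQ

set_option maxHeartbeats 8000000 in
lemma base_enum (a : P) :
    ∃ W : Finset P, (∀ p : P, p ∈ W ↔ p ≠ a ∧ ¬ S.Collinear a p) ∧ W.card = 8 ∧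
      Nat.card P = 15 := by
  classical
  obtain ⟨α1, α2, α3, ha1, ha2, ha3, haa1, haa2, haa3, hane12, hane13, hane23, hacov⟩ :=
    three_lines hGQ a
  obtain ⟨u1, u2, hu1m, hu2m, hau1, hau2, hu12, hcov1⟩ := exists_two_others ha1 haa1
  obtain ⟨u3, u4, hu3m, hu4m, hau3, hau4, hu34, hcov2⟩ := exists_two_others ha2 haa2
  obtain ⟨u5, u6, hu5m, hu6m, hau5, hau6, hu56, hcov3⟩ := exists_two_others ha3 haa3
  have hc1 : S.Collinear a u1 := collinear_mem ha1 haa1 hu1m hau1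
  have hc2 : S.Collinear a u2 := collinear_mem ha1 haa1 hu2m hau2
  have hc3 : S.Collinear a u3 := collinear_mem ha2 haa2 hu3m hau3
  have hc4 : S.Collinear a u4 := collinear_mem ha2 haa2 hu4m hau4
  have hc5 : S.Collinear a u5 := collinear_mem ha3 haa3 hu5m hau5
  have hc6 : S.Collinear a u6 := collinear_mem ha3 haa3 hu6m hau6
  have nu13 : u1 ≠ u3 := fun h => hane12 (line_eq ha1 ha2 hau1 haa1 hu1m haa2 (h.symm ▸ hu3m))
  have nu14 : u1 ≠ u4 := fun h => hane12 (line_eq ha1 ha2 hau1 haa1 hu1m haa2 (h.symm ▸ hu4m))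
  have nu15 : u1 ≠ u5 := fun h => hane13 (line_eq ha1 ha3 hau1 haa1 hu1m haa3 (h.symm ▸ hu5m))
  have nu16 : u1 ≠ u6 := fun h => hane13 (line_eq ha1 ha3 hau1 haa1 hu1m haa3 (h.symm ▸ hu6m))
  have nu23 : u2 ≠ u3 := fun h => hane12 (line_eq ha1 ha2 hau2 haa1 hu2m haa2 (h.symm ▸ hu3m))
  have nu24 : u2 ≠ u4 := fun h => hane12 (line_eq ha1 ha2 hau2 haa1 hu2m haa2 (h.symm ▸ hu4m))
  have nu25 : u2 ≠ u5 := fun h => hane13 (line_eq ha1 ha3 hau2 haa1 hu2m haa3 (h.symm ▸ hu5m))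
  have nu26 : u2 ≠ u6 := fun h => hane13 (line_eq ha1 ha3 hau2 haa1 hu2m haa3 (h.symm ▸ hu6m))
  have nu35 : u3 ≠ u5 := fun h => hane23 (line_eq ha2 ha3 hau3 haa2 hu3m haa3 (h.symm ▸ hu5m))
  have nu36 : u3 ≠ u6 := fun h => hane23 (line_eq ha2 ha3 hau3 haa2 hu3m haa3 (h.symm ▸ hu6m))
  have nu45 : u4 ≠ u5 := fun h => hane23 (line_eq ha2 ha3 hau4 haa2 hu4m haa3 (h.symm ▸ hu5m))
  have nu46 : u4 ≠ u6 := fun h => hane23 (line_eq ha2 ha3 hau4 haa2 hu4m haa3 (h.symm ▸ hu6m))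
  obtain ⟨m1, m2, hm1, hm2, hum1, hum2, hm12, hm1a, hm2a, covu1⟩ := other_two_lines hGQ ha1 hu1m
  obtain ⟨m3, m4, hm3, hm4, hum3, hum4, hm34, hm3a, hm4a, covu2⟩ := other_two_lines hGQ ha1 hu2m
  have ham1 : a ∉ m1 := fun h => hm1a (line_eq hm1 ha1 hau1 h hum1 haa1 hu1m)
  have ham2 : a ∉ m2 := fun h => hm2a (line_eq hm2 ha1 hau1 h hum2 haa1 hu1m)
  have ham3 : a ∉ m3 := fun h => hm3a (line_eq hm3 ha1 hau2 h hum3 haa1 hu2m)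
  have ham4 : a ∉ m4 := fun h => hm4a (line_eq hm4 ha1 hau2 h hum4 haa1 hu2m)
  obtain ⟨w1, w2, hw1, hw2, huw1, huw2, hw12, covm1⟩ := exists_two_others hm1 hum1
  obtain ⟨w3, w4, hw3, hw4, huw3, huw4, hw34, covm2⟩ := exists_two_others hm2 hum2
  obtain ⟨w5, w6, hw5, hw6, huw5, huw6, hw56, covm3⟩ := exists_two_others hm3 hum3
  obtain ⟨w7, w8, hw7, hw8, huw7, huw8, hw78, covm4⟩ := exists_two_others hm4 hum4
  have hna1 : ¬ S.Collinear a w1 := ncol_of_other hGQ hm1 ham1 hum1 hc1 hw1 huw1.symm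
  have hwa1 : w1 ≠ a := fun h => ham1 (h ▸ hw1)
  have hcw1 : S.Collinear w1 u1 := collinear_mem hm1 hw1 hum1 huw1.symm
  have hna2 : ¬ S.Collinear a w2 := ncol_of_other hGQ hm1 ham1 hum1 hc1 hw2 huw2.symm
  have hwa2 : w2 ≠ a := fun h => ham1 (h ▸ hw2)
  have hcw2 : S.Collinear w2 u1 := collinear_mem hm1 hw2 hum1 huw2.symm
  have hna3 : ¬ S.Collinear a w3 := ncol_of_other hGQ hm2 ham2 hum2 hc1 hw3 huw3.symm
  have hwa3 : w3 ≠ a := fun h => ham2 (h ▸ hw3)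
  have hcw3 : S.Collinear w3 u1 := collinear_mem hm2 hw3 hum2 huw3.symm
  have hna4 : ¬ S.Collinear a w4 := ncol_of_other hGQ hm2 ham2 hum2 hc1 hw4 huw4.symm
  have hwa4 : w4 ≠ a := fun h => ham2 (h ▸ hw4)
  have hcw4 : S.Collinear w4 u1 := collinear_mem hm2 hw4 hum2 huw4.symm
  have hna5 : ¬ S.Collinear a w5 := ncol_of_other hGQ hm3 ham3 hum3 hc2 hw5 huw5.symm
  have hwa5 : w5 ≠ a := fun h => ham3 (h ▸ hw5)
  have hcw5 : S.Collinear w5 u2 := collinear_mem hm3 hw5 hum3 huw5.symm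
  have hna6 : ¬ S.Collinear a w6 := ncol_of_other hGQ hm3 ham3 hum3 hc2 hw6 huw6.symm
  have hwa6 : w6 ≠ a := fun h => ham3 (h ▸ hw6)
  have hcw6 : S.Collinear w6 u2 := collinear_mem hm3 hw6 hum3 huw6.symm
  have hna7 : ¬ S.Collinear a w7 := ncol_of_other hGQ hm4 ham4 hum4 hc2 hw7 huw7.symm
  have hwa7 : w7 ≠ a := fun h => ham4 (h ▸ hw7)
  have hcw7 : S.Collinear w7 u2 := collinear_mem hm4 hw7 hum4 huw7.symm
  have hna8 : ¬ S.Collinear a w8 := ncol_of_other hGQ hm4 ham4 hum4 hc2 hw8 huw8.symm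
  have hwa8 : w8 ≠ a := fun h => ham4 (h ▸ hw8)
  have hcw8 : S.Collinear w8 u2 := collinear_mem hm4 hw8 hum4 huw8.symm
  have hwal1 : w1 ∉ α1 := fun h => by
    rcases hcov1 w1 h with h' | h' | h'
    · exact hwa1 h'
    · exact huw1 h'.symm
    · exact hna1 (h'.symm ▸ hc2)
  have hwal2 : w2 ∉ α1 := fun h => by
    rcases hcov1 w2 h with h' | h' | h'
    · exact hwa2 h'
    · exact huw2 h'.symm
    · exact hna2 (h'.symm ▸ hc2)
  have hwal3 : w3 ∉ α1 := fun h => by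
    rcases hcov1 w3 h with h' | h' | h'
    · exact hwa3 h'
    · exact huw3 h'.symm
    · exact hna3 (h'.symm ▸ hc2)
  have hwal4 : w4 ∉ α1 := fun h => by
    rcases hcov1 w4 h with h' | h' | h'
    · exact hwa4 h'
    · exact huw4 h'.symm
    · exact hna4 (h'.symm ▸ hc2)
  have hwal5 : w5 ∉ α1 := fun h => by
    rcases hcov1 w5 h with h' | h' | h'
    · exact hwa5 h'
    · exact hna5 (h'.symm ▸ hc1)
    · exact huw5 h'.symm
  have hwal6 : w6 ∉ α1 := fun h => by
    rcases hcov1 w6 h with h' | h' | h'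
    · exact hwa6 h'
    · exact hna6 (h'.symm ▸ hc1)
    · exact huw6 h'.symm
  have hwal7 : w7 ∉ α1 := fun h => by
    rcases hcov1 w7 h with h' | h' | h'
    · exact hwa7 h'
    · exact hna7 (h'.symm ▸ hc1)
    · exact huw7 h'.symm
  have hwal8 : w8 ∉ α1 := fun h => by
    rcases hcov1 w8 h with h' | h' | h'
    · exact hwa8 h'
    · exact hna8 (h'.symm ▸ hc1)
    · exact huw8 h'.symm
  have nw13 : w1 ≠ w3 := fun h => hm12 (line_eq hm1 hm2 huw3 hum1 (h ▸ hw1) hum2 hw3)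
  have nw14 : w1 ≠ w4 := fun h => hm12 (line_eq hm1 hm2 huw4 hum1 (h ▸ hw1) hum2 hw4)
  have nw15 : w1 ≠ w5 := fun h => hu12 (col_eq hGQ ha1 hwal5 hu1m (h ▸ hcw1) hu2m hcw5)
  have nw16 : w1 ≠ w6 := fun h => hu12 (col_eq hGQ ha1 hwal6 hu1m (h ▸ hcw1) hu2m hcw6)
  have nw17 : w1 ≠ w7 := fun h => hu12 (col_eq hGQ ha1 hwal7 hu1m (h ▸ hcw1) hu2m hcw7)
  have nw18 : w1 ≠ w8 := fun h => hu12 (col_eq hGQ ha1 hwal8 hu1m (h ▸ hcw1) hu2m hcw8)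
  have nw23 : w2 ≠ w3 := fun h => hm12 (line_eq hm1 hm2 huw3 hum1 (h ▸ hw2) hum2 hw3)
  have nw24 : w2 ≠ w4 := fun h => hm12 (line_eq hm1 hm2 huw4 hum1 (h ▸ hw2) hum2 hw4)
  have nw25 : w2 ≠ w5 := fun h => hu12 (col_eq hGQ ha1 hwal5 hu1m (h ▸ hcw2) hu2m hcw5)
  have nw26 : w2 ≠ w6 := fun h => hu12 (col_eq hGQ ha1 hwal6 hu1m (h ▸ hcw2) hu2m hcw6)
  have nw27 : w2 ≠ w7 := fun h => hu12 (col_eq hGQ ha1 hwal7 hu1m (h ▸ hcw2) hu2m hcw7)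
  have nw28 : w2 ≠ w8 := fun h => hu12 (col_eq hGQ ha1 hwal8 hu1m (h ▸ hcw2) hu2m hcw8)
  have nw35 : w3 ≠ w5 := fun h => hu12 (col_eq hGQ ha1 hwal5 hu1m (h ▸ hcw3) hu2m hcw5)
  have nw36 : w3 ≠ w6 := fun h => hu12 (col_eq hGQ ha1 hwal6 hu1m (h ▸ hcw3) hu2m hcw6)
  have nw37 : w3 ≠ w7 := fun h => hu12 (col_eq hGQ ha1 hwal7 hu1m (h ▸ hcw3) hu2m hcw7)
  have nw38 : w3 ≠ w8 := fun h => hu12 (col_eq hGQ ha1 hwal8 hu1m (h ▸ hcw3) hu2m hcw8)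
  have nw45 : w4 ≠ w5 := fun h => hu12 (col_eq hGQ ha1 hwal5 hu1m (h ▸ hcw4) hu2m hcw5)
  have nw46 : w4 ≠ w6 := fun h => hu12 (col_eq hGQ ha1 hwal6 hu1m (h ▸ hcw4) hu2m hcw6)
  have nw47 : w4 ≠ w7 := fun h => hu12 (col_eq hGQ ha1 hwal7 hu1m (h ▸ hcw4) hu2m hcw7)
  have nw48 : w4 ≠ w8 := fun h => hu12 (col_eq hGQ ha1 hwal8 hu1m (h ▸ hcw4) hu2m hcw8)
  have nw57 : w5 ≠ w7 := fun h => hm34 (line_eq hm3 hm4 huw7 hum3 (h ▸ hw5) hum4 hw7)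
  have nw58 : w5 ≠ w8 := fun h => hm34 (line_eq hm3 hm4 huw8 hum3 (h ▸ hw5) hum4 hw8)
  have nw67 : w6 ≠ w7 := fun h => hm34 (line_eq hm3 hm4 huw7 hum3 (h ▸ hw6) hum4 hw7)
  have nw68 : w6 ≠ w8 := fun h => hm34 (line_eq hm3 hm4 huw8 hum3 (h ▸ hw6) hum4 hw8)
  have nmU0 : a ∉ ({u1,u2,u3,u4,u5,u6} : Finset P) := by
    simp only [Finset.mem_insert, Finset.mem_singleton]; push_neg
    exact ⟨hau1, hau2, hau3, hau4, hau5, hau6⟩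
  have nmU1 : u1 ∉ ({u2,u3,u4,u5,u6} : Finset P) := by
    simp only [Finset.mem_insert, Finset.mem_singleton]; push_neg
    exact ⟨hu12, nu13, nu14, nu15, nu16⟩
  have nmU2 : u2 ∉ ({u3,u4,u5,u6} : Finset P) := by
    simp only [Finset.mem_insert, Finset.mem_singleton]; push_neg
    exact ⟨nu23, nu24, nu25, nu26⟩
  have nmU3 : u3 ∉ ({u4,u5,u6} : Finset P) := by
    simp only [Finset.mem_insert, Finset.mem_singleton]; push_neg
    exact ⟨hu34, nu35, nu36⟩
  have nmU4 : u4 ∉ ({u5,u6} : Finset P) := by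
    simp only [Finset.mem_insert, Finset.mem_singleton]; push_neg
    exact ⟨nu45, nu46⟩
  have nmU5 : u5 ∉ ({u6} : Finset P) := by
    simp only [Finset.mem_insert, Finset.mem_singleton]; push_neg
    exact hu56
  have cU : ({a,u1,u2,u3,u4,u5,u6} : Finset P).card = 7 := by
    rw [Finset.card_insert_of_notMem nmU0, Finset.card_insert_of_notMem nmU1,
      Finset.card_insert_of_notMem nmU2, Finset.card_insert_of_notMem nmU3,
      Finset.card_insert_of_notMem nmU4, Finset.card_insert_of_notMem nmU5,
      Finset.card_singleton]
  have nmW1 : w1 ∉ ({w2,w3,w4,w5,w6,w7,w8} : Finset P) := by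
    simp only [Finset.mem_insert, Finset.mem_singleton]; push_neg
    exact ⟨hw12, nw13, nw14, nw15, nw16, nw17, nw18⟩
  have nmW2 : w2 ∉ ({w3,w4,w5,w6,w7,w8} : Finset P) := by
    simp only [Finset.mem_insert, Finset.mem_singleton]; push_neg
    exact ⟨nw23, nw24, nw25, nw26, nw27, nw28⟩
  have nmW3 : w3 ∉ ({w4,w5,w6,w7,w8} : Finset P) := by
    simp only [Finset.mem_insert, Finset.mem_singleton]; push_neg
    exact ⟨hw34, nw35, nw36, nw37, nw38⟩
  have nmW4 : w4 ∉ ({w5,w6,w7,w8} : Finset P) := by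
    simp only [Finset.mem_insert, Finset.mem_singleton]; push_neg
    exact ⟨nw45, nw46, nw47, nw48⟩
  have nmW5 : w5 ∉ ({w6,w7,w8} : Finset P) := by
    simp only [Finset.mem_insert, Finset.mem_singleton]; push_neg
    exact ⟨hw56, nw57, nw58⟩
  have nmW6 : w6 ∉ ({w7,w8} : Finset P) := by
    simp only [Finset.mem_insert, Finset.mem_singleton]; push_neg
    exact ⟨nw67, nw68⟩
  have nmW7 : w7 ∉ ({w8} : Finset P) := by
    simp only [Finset.mem_insert, Finset.mem_singleton]; push_neg
    exact hw78
  have cW : ({w1,w2,w3,w4,w5,w6,w7,w8} : Finset P).card = 8 := by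
    rw [Finset.card_insert_of_notMem nmW1, Finset.card_insert_of_notMem nmW2,
      Finset.card_insert_of_notMem nmW3, Finset.card_insert_of_notMem nmW4,
      Finset.card_insert_of_notMem nmW5, Finset.card_insert_of_notMem nmW6,
      Finset.card_insert_of_notMem nmW7, Finset.card_singleton]
  have hWc : ∀ p : P, p ∈ ({w1,w2,w3,w4,w5,w6,w7,w8} : Finset P) ↔ p ≠ a ∧ ¬ S.Collinear a p := by
    intro p
    simp only [Finset.mem_insert, Finset.mem_singleton]
    constructor
    · intro hp
      rcases hp with rfl|rfl|rfl|rfl|rfl|rfl|rfl|rfl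
      exacts [⟨hwa1, hna1⟩, ⟨hwa2, hna2⟩, ⟨hwa3, hna3⟩, ⟨hwa4, hna4⟩,
        ⟨hwa5, hna5⟩, ⟨hwa6, hna6⟩, ⟨hwa7, hna7⟩, ⟨hwa8, hna8⟩]
    · rintro ⟨hpa, hpc⟩
      have hpal : p ∉ α1 := fun h => by
        rcases hcov1 p h with h' | h' | h'
        · exact hpa h'
        · exact hpc (h'.symm ▸ hc1)
        · exact hpc (h'.symm ▸ hc2)
      obtain ⟨q, hq, hcpq⟩ := exists_col hGQ ha1 hpal
      rcases hcov1 q hq with h' | h' | h'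
      · exact absurd ((h' ▸ hcpq).symm') hpc
      · obtain ⟨hpq, n, hn, hpn, hqn⟩ := h' ▸ hcpq
        rcases covu1 n hn hqn with h3 | h3 | h3
        · exact absurd (h3 ▸ hpn) hpal
        · rcases covm1 p (h3 ▸ hpn) with h'' | h'' | h''
          · exact absurd h'' hpq
          · exact Or.inl h''
          · exact Or.inr (Or.inl h'')
        · rcases covm2 p (h3 ▸ hpn) with h'' | h'' | h''
          · exact absurd h'' hpq
          · exact Or.inr (Or.inr (Or.inl h''))
          · exact Or.inr (Or.inr (Or.inr (Or.inl h'')))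
      · obtain ⟨hpq, n, hn, hpn, hqn⟩ := h' ▸ hcpq
        rcases covu2 n hn hqn with h3 | h3 | h3
        · exact absurd (h3 ▸ hpn) hpal
        · rcases covm3 p (h3 ▸ hpn) with h'' | h'' | h''
          · exact absurd h'' hpq
          · exact Or.inr (Or.inr (Or.inr (Or.inr (Or.inl h''))))
          · exact Or.inr (Or.inr (Or.inr (Or.inr (Or.inr (Or.inl h'')))))
        · rcases covm4 p (h3 ▸ hpn) with h'' | h'' | h''
          · exact absurd h'' hpq
          · exact Or.inr (Or.inr (Or.inr (Or.inr (Or.inr (Or.inr (Or.inl h''))))))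
          · exact Or.inr (Or.inr (Or.inr (Or.inr (Or.inr (Or.inr (Or.inr (h'')))))))
  have hUp : ∀ p ∈ ({a,u1,u2,u3,u4,u5,u6} : Finset P), p = a ∨ S.Collinear a p := by
    intro p hp
    simp only [Finset.mem_insert, Finset.mem_singleton] at hp
    rcases hp with rfl|rfl|rfl|rfl|rfl|rfl|rfl
    exacts [Or.inl rfl, Or.inr hc1, Or.inr hc2, Or.inr hc3, Or.inr hc4, Or.inr hc5, Or.inr hc6]
  have hdisj : Disjoint ({a,u1,u2,u3,u4,u5,u6} : Finset P) ({w1,w2,w3,w4,w5,w6,w7,w8} : Finset P) := by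
    rw [Finset.disjoint_left]
    intro p hpU hpW
    obtain ⟨h1, h2⟩ := (hWc p).1 hpW
    rcases hUp p hpU with h | h
    · exact h1 h
    · exact h2 h
  have hcovAll : ∀ p : P, p ∈ ({a,u1,u2,u3,u4,u5,u6} : Finset P) ∪ ({w1,w2,w3,w4,w5,w6,w7,w8} : Finset P) := by
    intro p
    by_cases hpa : p = a
    · exact Finset.mem_union_left _ (by simp [hpa])
    by_cases hpc : S.Collinear a p
    · apply Finset.mem_union_left
      obtain ⟨hne', l, hl, hal, hpl⟩ := hpc
      rcases hacov l hl hal with rfl | rfl | rfl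
      · rcases hcov1 p hpl with h|h|h <;> simp [h]
      · rcases hcov2 p hpl with h|h|h <;> simp [h]
      · rcases hcov3 p hpl with h|h|h <;> simp [h]
    · exact Finset.mem_union_right _ ((hWc p).2 ⟨hpa, hpc⟩)
  refine ⟨{w1,w2,w3,w4,w5,w6,w7,w8}, hWc, cW, ?_⟩
  have e : (↑(({a,u1,u2,u3,u4,u5,u6} : Finset P) ∪ ({w1,w2,w3,w4,w5,w6,w7,w8} : Finset P)) : Set P) = Set.univ :=
    Set.eq_univ_of_forall fun p => Finset.mem_coe.mpr (hcovAll p)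
  calc Nat.card P = (Set.univ : Set P).ncard := (Set.ncard_univ P).symm
  _ = (↑(({a,u1,u2,u3,u4,u5,u6} : Finset P) ∪ ({w1,w2,w3,w4,w5,w6,w7,w8} : Finset P)) : Set P).ncard := by rw [e]
  _ = (({a,u1,u2,u3,u4,u5,u6} : Finset P) ∪ ({w1,w2,w3,w4,w5,w6,w7,w8} : Finset P)).card := Set.ncard_coe_finset _
  _ = 15 := by rw [Finset.card_union_of_disjoint hdisj, cU, cW]

end Enum

end SlimPLS
namespace SlimPLS

section NCount

variable {P : Type*} {S : SlimPLS P} (hGQ : S.IsGQ 2)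
include hGQ

lemma ncard_N {a b : P} (hab : ¬ S.Collinear a b) (hne : a ≠ b) :
    {p : P | p ≠ a ∧ p ≠ b ∧ ¬ S.Collinear a p ∧ ¬ S.Collinear b p}.ncard = 4 := by
  classical
  obtain ⟨W, hWc, cW, -⟩ := base_enum hGQ a
  obtain ⟨l1, l2, l3, hl1, hl2, hl3, hb1, hb2, hb3, h12, h13, h23, hcov⟩ := three_lines hGQ b
  obtain ⟨h1, hh1, hh1b, hh1a, hu1⟩ := off_point hGQ hab hne hl1 hb1
  obtain ⟨h2, hh2, hh2b, hh2a, hu2⟩ := off_point hGQ hab hne hl2 hb2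
  obtain ⟨h3, hh3, hh3b, hh3a, hu3⟩ := off_point hGQ hab hne hl3 hb3
  have n12 : h1 ≠ h2 := fun h => h12 (line_eq hl1 hl2 hh1b hh1 hb1 (h.symm ▸ hh2) hb2)
  have n13 : h1 ≠ h3 := fun h => h13 (line_eq hl1 hl3 hh1b hh1 hb1 (h.symm ▸ hh3) hb3)
  have n23 : h2 ≠ h3 := fun h => h23 (line_eq hl2 hl3 hh2b hh2 hb2 (h.symm ▸ hh3) hb3)
  have hal1 : a ∉ l1 := fun h => hab ⟨hne, l1, hl1, h, hb1⟩
  have hal2 : a ∉ l2 := fun h => hab ⟨hne, l2, hl2, h, hb2⟩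
  have hal3 : a ∉ l3 := fun h => hab ⟨hne, l3, hl3, h, hb3⟩
  have hh1na : h1 ≠ a := fun h => hal1 (h ▸ hh1)
  have hh2na : h2 ≠ a := fun h => hal2 (h ▸ hh2)
  have hh3na : h3 ≠ a := fun h => hal3 (h ▸ hh3)
  have hcb1 : S.Collinear b h1 := collinear_mem hl1 hb1 hh1 hh1b.symm
  have hcb2 : S.Collinear b h2 := collinear_mem hl2 hb2 hh2 hh2b.symm
  have hcb3 : S.Collinear b h3 := collinear_mem hl3 hb3 hh3 hh3b.symm
  have hbW : b ∈ W := (hWc b).2 ⟨hne.symm, hab⟩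
  have h1W : h1 ∈ W := (hWc h1).2 ⟨hh1na, hh1a⟩
  have h2W : h2 ∈ W := (hWc h2).2 ⟨hh2na, hh2a⟩
  have h3W : h3 ∈ W := (hWc h3).2 ⟨hh3na, hh3a⟩
  have hTsub : ({b, h1, h2, h3} : Finset P) ⊆ W := by
    intro p hp
    simp only [Finset.mem_insert, Finset.mem_singleton] at hp
    rcases hp with rfl|rfl|rfl|rfl
    exacts [hbW, h1W, h2W, h3W]
  have hTcard : ({b, h1, h2, h3} : Finset P).card = 4 := by
    rw [Finset.card_insert_of_notMem (by
        simp only [Finset.mem_insert, Finset.mem_singleton]; push_neg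
        exact ⟨hh1b.symm, hh2b.symm, hh3b.symm⟩),
      Finset.card_insert_of_notMem (by
        simp only [Finset.mem_insert, Finset.mem_singleton]; push_neg
        exact ⟨n12, n13⟩),
      Finset.card_insert_of_notMem (by
        simp only [Finset.mem_singleton]
        exact n23),
      Finset.card_singleton]
  have hNeq : {p : P | p ≠ a ∧ p ≠ b ∧ ¬ S.Collinear a p ∧ ¬ S.Collinear b p} =
      ↑(W \ ({b, h1, h2, h3} : Finset P)) := by
    ext p
    simp only [Set.mem_setOf_eq, Finset.coe_sdiff, Set.mem_diff, Finset.mem_coe,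
      Finset.mem_insert, Finset.mem_singleton]
    constructor
    · rintro ⟨hpa, hpb, hpca, hpcb⟩
      refine ⟨(hWc p).2 ⟨hpa, hpca⟩, ?_⟩
      push_neg
      refine ⟨hpb, ?_, ?_, ?_⟩
      · exact fun h => hpcb (h.symm ▸ hcb1)
      · exact fun h => hpcb (h.symm ▸ hcb2)
      · exact fun h => hpcb (h.symm ▸ hcb3)
    · rintro ⟨hpW, hpT⟩
      push_neg at hpT
      obtain ⟨hpb, hp1, hp2, hp3⟩ := hpT
      obtain ⟨hpa, hpca⟩ := (hWc p).1 hpW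
      refine ⟨hpa, hpb, hpca, fun hc => ?_⟩
      obtain ⟨hbp, n, hn, hbn, hpn⟩ := hc
      rcases hcov n hn hbn with rfl | rfl | rfl
      · exact hp1 (hu1 p hpn hbp.symm hpca)
      · exact hp2 (hu2 p hpn hbp.symm hpca)
      · exact hp3 (hu3 p hpn hbp.symm hpca)
  rw [hNeq, Set.ncard_coe_finset, Finset.card_sdiff_of_subset hTsub, cW, hTcard]

end NCount

end SlimPLS
namespace SlimPLS

section Perp

variable {P : Type*} {S : SlimPLS P} (hGQ : S.IsGQ 2)
include hGQ

lemma third_line_of {x : P} {la lb : Finset P} (hla : la ∈ S.lines) (hlb : lb ∈ S.lines)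
    (hxa : x ∈ la) (hxb : x ∈ lb) (hnab : la ≠ lb) :
    ∃ t ∈ S.lines, x ∈ t ∧ t ≠ la ∧ t ≠ lb ∧
      ∀ n ∈ S.lines, x ∈ n → n = la ∨ n = lb ∨ n = t := by
  obtain ⟨l1, l2, l3, hl1, hl2, hl3, hx1, hx2, hx3, h12, h13, h23, hcov⟩ := three_lines hGQ x
  rcases hcov la hla hxa with h1 | h1 | h1 <;> rcases hcov lb hlb hxb with h2 | h2 | h2
  · exact absurd (h1.trans h2.symm) hnab
  · exact ⟨l3, hl3, hx3, by rw [h1]; exact h13.symm, by rw [h2]; exact h23.symm,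
      fun n hn hxn => by rw [h1, h2]; have := hcov n hn hxn; tauto⟩
  · exact ⟨l2, hl2, hx2, by rw [h1]; exact h12.symm, by rw [h2]; exact h23,
      fun n hn hxn => by rw [h1, h2]; have := hcov n hn hxn; tauto⟩
  · exact ⟨l3, hl3, hx3, by rw [h1]; exact h23.symm, by rw [h2]; exact h13.symm,
      fun n hn hxn => by rw [h1, h2]; have := hcov n hn hxn; tauto⟩
  · exact absurd (h1.trans h2.symm) hnab
  · exact ⟨l1, hl1, hx1, by rw [h1]; exact h12, by rw [h2]; exact h13,
      fun n hn hxn => by rw [h1, h2]; have := hcov n hn hxn; tauto⟩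
  · exact ⟨l2, hl2, hx2, by rw [h1]; exact h23, by rw [h2]; exact h12.symm,
      fun n hn hxn => by rw [h1, h2]; have := hcov n hn hxn; tauto⟩
  · exact ⟨l1, hl1, hx1, by rw [h1]; exact h13, by rw [h2]; exact h12,
      fun n hn hxn => by rw [h1, h2]; have := hcov n hn hxn; tauto⟩
  · exact absurd (h1.trans h2.symm) hnab

lemma perp {a b : P} (hab : ¬ S.Collinear a b) (hne : a ≠ b) :
    ∃ z1 z2 z3 : P, z1 ≠ z2 ∧ z1 ≠ z3 ∧ z2 ≠ z3 ∧
      S.Collinear a z1 ∧ S.Collinear a z2 ∧ S.Collinear a z3 ∧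
      S.Collinear b z1 ∧ S.Collinear b z2 ∧ S.Collinear b z3 ∧
      ¬ S.Collinear z1 z2 ∧ ¬ S.Collinear z1 z3 ∧ ¬ S.Collinear z2 z3 ∧
      ∀ w : P, S.Collinear a w → S.Collinear b w → w = z1 ∨ w = z2 ∨ w = z3 := by
  obtain ⟨l1, l2, l3, hl1, hl2, hl3, hb1, hb2, hb3, h12, h13, h23, hcov⟩ := three_lines hGQ b
  have hal1 : a ∉ l1 := fun h => hab ⟨hne, l1, hl1, h, hb1⟩
  have hal2 : a ∉ l2 := fun h => hab ⟨hne, l2, hl2, h, hb2⟩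
  have hal3 : a ∉ l3 := fun h => hab ⟨hne, l3, hl3, h, hb3⟩
  obtain ⟨z1, hz1, hcz1⟩ := exists_col hGQ hl1 hal1
  obtain ⟨z2, hz2, hcz2⟩ := exists_col hGQ hl2 hal2
  obtain ⟨z3, hz3, hcz3⟩ := exists_col hGQ hl3 hal3
  have hz1b : z1 ≠ b := fun h => hab (h ▸ hcz1)
  have hz2b : z2 ≠ b := fun h => hab (h ▸ hcz2)
  have hz3b : z3 ≠ b := fun h => hab (h ▸ hcz3)
  have hcbz1 : S.Collinear b z1 := collinear_mem hl1 hb1 hz1 hz1b.symm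
  have hcbz2 : S.Collinear b z2 := collinear_mem hl2 hb2 hz2 hz2b.symm
  have hcbz3 : S.Collinear b z3 := collinear_mem hl3 hb3 hz3 hz3b.symm
  have n12 : z1 ≠ z2 := fun h => h12 (line_eq hl1 hl2 hz1b hz1 hb1 (h.symm ▸ hz2) hb2)
  have n13 : z1 ≠ z3 := fun h => h13 (line_eq hl1 hl3 hz1b hz1 hb1 (h.symm ▸ hz3) hb3)
  have n23 : z2 ≠ z3 := fun h => h23 (line_eq hl2 hl3 hz2b hz2 hb2 (h.symm ▸ hz3) hb3)
  have key : ∀ u v : P, u ≠ v → S.Collinear a u → S.Collinear a v →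
      S.Collinear b u → S.Collinear b v → ¬ S.Collinear u v := by
    intro u v huv hcau hcav hcbu hcbv hc
    obtain ⟨w, m, hm, hum, hvm, hwm, hwu, hwv, hcovm⟩ := third_point hc
    by_cases haw : a = w
    · have hbm : b ∉ m := fun h => by
        rcases hcovm b h with h' | h' | h'
        · exact hcbu.ne h'
        · exact hcbv.ne h'
        · exact hne (haw.trans h'.symm)
      exact huv (col_eq hGQ hm hbm hum hcbu hvm hcbv)
    · have ham : a ∉ m := fun h => by
        rcases hcovm a h with h' | h' | h'
        · exact hcau.ne h'
        · exact hcav.ne h'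
        · exact haw h'
      exact huv (col_eq hGQ hm ham hum hcau hvm hcav)
  refine ⟨z1, z2, z3, n12, n13, n23, hcz1, hcz2, hcz3, hcbz1, hcbz2, hcbz3,
    key z1 z2 n12 hcz1 hcz2 hcbz1 hcbz2, key z1 z3 n13 hcz1 hcz3 hcbz1 hcbz3,
    key z2 z3 n23 hcz2 hcz3 hcbz2 hcbz3, fun w hcaw hcbw => ?_⟩
  obtain ⟨hbw, n, hn, hbn, hwn⟩ := hcbw
  rcases hcov n hn hbn with rfl | rfl | rfl
  · exact Or.inl (col_eq hGQ hl1 hal1 hwn hcaw hz1 hcz1)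
  · exact Or.inr (Or.inl (col_eq hGQ hl2 hal2 hwn hcaw hz2 hcz2))
  · exact Or.inr (Or.inr (col_eq hGQ hl3 hal3 hwn hcaw hz3 hcz3))

end Perp

end SlimPLS
namespace SlimPLS

section Star

variable {P : Type*} {S : SlimPLS P} (hGQ : S.IsGQ 2)
include hGQ

set_option maxHeartbeats 2000000 in
lemma star {a b : P} (hab : ¬ S.Collinear a b) (hne : a ≠ b) :
    ∃ c y1 y2 y3 : P,
      (¬ S.Collinear a c ∧ ¬ S.Collinear b c ∧ c ≠ a ∧ c ≠ b) ∧
      (¬ S.Collinear a y1 ∧ ¬ S.Collinear b y1 ∧ y1 ≠ a ∧ y1 ≠ b) ∧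
      (¬ S.Collinear a y2 ∧ ¬ S.Collinear b y2 ∧ y2 ≠ a ∧ y2 ≠ b) ∧
      (¬ S.Collinear a y3 ∧ ¬ S.Collinear b y3 ∧ y3 ≠ a ∧ y3 ≠ b) ∧
      y1 ≠ c ∧ y2 ≠ c ∧ y3 ≠ c ∧ y1 ≠ y2 ∧ y1 ≠ y3 ∧ y2 ≠ y3 ∧
      S.Collinear c y1 ∧ S.Collinear c y2 ∧ S.Collinear c y3 ∧
      ¬ S.Collinear y1 y2 ∧ ¬ S.Collinear y1 y3 ∧ ¬ S.Collinear y2 y3 ∧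
      ∀ d : P, d ≠ a → d ≠ b → ¬ S.Collinear a d → ¬ S.Collinear b d → d ≠ c →
        d = y1 ∨ d = y2 ∨ d = y3 := by
  classical
  obtain ⟨W0, -, -, hP15⟩ := base_enum hGQ a
  have hfinP : Finite P := Nat.finite_of_card_ne_zero (by omega)
  have hN4 : {p : P | p ≠ a ∧ p ≠ b ∧ ¬ S.Collinear a p ∧ ¬ S.Collinear b p}.ncard = 4 :=
    ncard_N hGQ hab hne
  obtain ⟨z1, z2, z3, nz12, nz13, nz23, ca1, ca2, ca3, cb1, cb2, cb3, nc12, nc13, nc23, hzcov⟩ :=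
    perp hGQ hab hne
  obtain ⟨naz1, la1, hla1, hala1, hz1la1⟩ := id ca1
  obtain ⟨naz2, la2, hla2, hala2, hz2la2⟩ := id ca2
  obtain ⟨naz3, la3, hla3, hala3, hz3la3⟩ := id ca3
  obtain ⟨nbz1, lb1, hlb1, hblb1, hz1lb1⟩ := id cb1
  obtain ⟨nbz2, lb2, hlb2, hblb2, hz2lb2⟩ := id cb2
  obtain ⟨nbz3, lb3, hlb3, hblb3, hz3lb3⟩ := id cb3
  have hab1 : la1 ≠ lb1 := fun h => hab ⟨hne, la1, hla1, hala1, h.symm ▸ hblb1⟩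
  have hab2 : la2 ≠ lb2 := fun h => hab ⟨hne, la2, hla2, hala2, h.symm ▸ hblb2⟩
  have hab3 : la3 ≠ lb3 := fun h => hab ⟨hne, la3, hla3, hala3, h.symm ▸ hblb3⟩
  obtain ⟨t1, ht1, hz1t1, ht1a, ht1b, covz1⟩ := third_line_of hGQ hla1 hlb1 hz1la1 hz1lb1 hab1
  have hat1 : a ∉ t1 := fun h => ht1a (line_eq ht1 hla1 naz1 h hz1t1 hala1 hz1la1)
  have hbt1 : b ∉ t1 := fun h => ht1b (line_eq ht1 hlb1 nbz1 h hz1t1 hblb1 hz1lb1)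
  obtain ⟨X, Y, hXt1, hYt1, hz1X, hz1Y, hXY, covt1⟩ := exists_two_others ht1 hz1t1
  have hnaX : ¬ S.Collinear a X := ncol_of_other hGQ ht1 hat1 hz1t1 ca1 hXt1 hz1X.symm
  have hnbX : ¬ S.Collinear b X := ncol_of_other hGQ ht1 hbt1 hz1t1 cb1 hXt1 hz1X.symm
  have hXa : X ≠ a := fun h => hat1 (h ▸ hXt1)
  have hXb : X ≠ b := fun h => hbt1 (h ▸ hXt1)
  have hnaY : ¬ S.Collinear a Y := ncol_of_other hGQ ht1 hat1 hz1t1 ca1 hYt1 hz1Y.symm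
  have hnbY : ¬ S.Collinear b Y := ncol_of_other hGQ ht1 hbt1 hz1t1 cb1 hYt1 hz1Y.symm
  have hYa : Y ≠ a := fun h => hat1 (h ▸ hYt1)
  have hYb : Y ≠ b := fun h => hbt1 (h ▸ hYt1)
  have hz2t1 : z2 ∉ t1 := fun h => by
    rcases covt1 z2 h with h' | h' | h'
    · exact nz12 h'.symm
    · exact hnaX (h' ▸ ca2)
    · exact hnaY (h' ▸ ca2)
  obtain ⟨q1, hq1t1, hcz2q1⟩ := exists_col hGQ ht1 hz2t1
  have key : ∀ C Y1 : P, C ∈ t1 → Y1 ∈ t1 → z1 ≠ C → z1 ≠ Y1 → C ≠ Y1 →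
      (∀ w ∈ t1, w = z1 ∨ w = C ∨ w = Y1) →
      ¬ S.Collinear a C → ¬ S.Collinear b C → C ≠ a → C ≠ b →
      ¬ S.Collinear a Y1 → ¬ S.Collinear b Y1 → Y1 ≠ a → Y1 ≠ b →
      S.Collinear z2 C →
      ∃ c y1 y2 y3 : P,
      (¬ S.Collinear a c ∧ ¬ S.Collinear b c ∧ c ≠ a ∧ c ≠ b) ∧
      (¬ S.Collinear a y1 ∧ ¬ S.Collinear b y1 ∧ y1 ≠ a ∧ y1 ≠ b) ∧
      (¬ S.Collinear a y2 ∧ ¬ S.Collinear b y2 ∧ y2 ≠ a ∧ y2 ≠ b) ∧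
      (¬ S.Collinear a y3 ∧ ¬ S.Collinear b y3 ∧ y3 ≠ a ∧ y3 ≠ b) ∧
      y1 ≠ c ∧ y2 ≠ c ∧ y3 ≠ c ∧ y1 ≠ y2 ∧ y1 ≠ y3 ∧ y2 ≠ y3 ∧
      S.Collinear c y1 ∧ S.Collinear c y2 ∧ S.Collinear c y3 ∧
      ¬ S.Collinear y1 y2 ∧ ¬ S.Collinear y1 y3 ∧ ¬ S.Collinear y2 y3 ∧
      ∀ d : P, d ≠ a → d ≠ b → ¬ S.Collinear a d → ¬ S.Collinear b d → d ≠ c →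
        d = y1 ∨ d = y2 ∨ d = y3 := by
    intro C Y1 hCt1 hY1t1 hz1C hz1Y1 hCY1 covt1' hnaC hnbC hCa hCb hnaY1 hnbY1 hY1a hY1b hz2C
    have nz2Y1 : z2 ≠ Y1 := fun hh => hnaY1 (hh ▸ ca2)
    have nz3Y1 : z3 ≠ Y1 := fun hh => hnaY1 (hh ▸ ca3)
    have nz3C : z3 ≠ C := fun hh => hnaC (hh ▸ ca3)
    have hz2nY1 : ¬ S.Collinear z2 Y1 := ncol_of_other hGQ ht1 hz2t1 hCt1 hz2C hY1t1 hCY1.symm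
    obtain ⟨u2, t2, ht2, hz2t2, hCt2, hu2t2, hu2z2, hu2C, covt2⟩ := third_point hz2C
    have hat2 : a ∉ t2 := fun h => hnaC ⟨hCa.symm, t2, ht2, h, hCt2⟩
    have hbt2 : b ∉ t2 := fun h => hnbC ⟨hCb.symm, t2, ht2, h, hCt2⟩
    have hnau2 : ¬ S.Collinear a u2 := ncol_of_other hGQ ht2 hat2 hz2t2 ca2 hu2t2 hu2z2
    have hnbu2 : ¬ S.Collinear b u2 := ncol_of_other hGQ ht2 hbt2 hz2t2 cb2 hu2t2 hu2z2
    have hu2a : u2 ≠ a := fun h => hat2 (h ▸ hu2t2)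
    have hu2b : u2 ≠ b := fun h => hbt2 (h ▸ hu2t2)
    have covz2 := lines_cover hGQ hla2 hlb2 ht2 hz2la2 hz2lb2 hz2t2 hab2
      (fun h => hat2 (h ▸ hala2)) (fun h => hbt2 (h ▸ hblb2))
    have hcz2u2 : S.Collinear z2 u2 := collinear_mem ht2 hz2t2 hu2t2 hu2z2.symm
    have nY1u2 : Y1 ≠ u2 := fun h => hz2nY1 (h.symm ▸ hcz2u2)
    have hz3t1 : z3 ∉ t1 := fun h => by
      rcases covt1' z3 h with h' | h' | h'
      · exact nz13 h'.symm
      · exact hnaC (h' ▸ ca3)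
      · exact hnaY1 (h' ▸ ca3)
    obtain ⟨q3, hq3t1, hcz3q3⟩ := exists_col hGQ ht1 hz3t1
    rcases covt1' q3 hq3t1 with h' | h' | h'
    · exact absurd (h' ▸ hcz3q3) (ncol_symm nc13)
    · -- CASE A : z3 collinear with C
      have hz3C : S.Collinear z3 C := h' ▸ hcz3q3
      have hz3nY1 : ¬ S.Collinear z3 Y1 := ncol_of_other hGQ ht1 hz3t1 hCt1 hz3C hY1t1 hCY1.symm
      obtain ⟨u3, t3, ht3, hz3t3, hCt3, hu3t3, hu3z3, hu3C, covt3⟩ := third_point hz3C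
      have hat3 : a ∉ t3 := fun h => hnaC ⟨hCa.symm, t3, ht3, h, hCt3⟩
      have hbt3 : b ∉ t3 := fun h => hnbC ⟨hCb.symm, t3, ht3, h, hCt3⟩
      have hnau3 : ¬ S.Collinear a u3 := ncol_of_other hGQ ht3 hat3 hz3t3 ca3 hu3t3 hu3z3
      have hnbu3 : ¬ S.Collinear b u3 := ncol_of_other hGQ ht3 hbt3 hz3t3 cb3 hu3t3 hu3z3
      have hu3a : u3 ≠ a := fun h => hat3 (h ▸ hu3t3)
      have hu3b : u3 ≠ b := fun h => hbt3 (h ▸ hu3t3)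
      have hcz3u3 : S.Collinear z3 u3 := collinear_mem ht3 hz3t3 hu3t3 hu3z3.symm
      have nY1u3 : Y1 ≠ u3 := fun h => hz3nY1 (h.symm ▸ hcz3u3)
      have nu2u3 : u2 ≠ u3 := by
        intro h
        have ht23 : t2 = t3 := line_eq ht2 ht3 hu2C.symm hCt2 hu2t2 hCt3 (h.symm ▸ hu3t3)
        exact nc23 (collinear_mem ht2 hz2t2 (ht23.symm ▸ hz3t3) nz23)
      have nY1cu2 : ¬ S.Collinear Y1 u2 := by
        intro hc
        obtain ⟨w, m, hm, hY1m, hu2m, hwm, hwY1, hwu2, covm⟩ := third_point hc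
        have ham : a ∉ m := fun h => hnaY1 ⟨hY1a.symm, m, hm, h, hY1m⟩
        have hbm : b ∉ m := fun h => hnbY1 ⟨hY1b.symm, m, hm, h, hY1m⟩
        obtain ⟨qa, hqam, hcaqa⟩ := exists_col hGQ hm ham
        have hcaw : S.Collinear a w := by
          rcases covm qa hqam with h'' | h'' | h''
          · exact absurd (h'' ▸ hcaqa) hnaY1
          · exact absurd (h'' ▸ hcaqa) hnau2
          · exact h'' ▸ hcaqa
        obtain ⟨qb, hqbm, hcbqb⟩ := exists_col hGQ hm hbm
        have hcbw : S.Collinear b w := by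
          rcases covm qb hqbm with h'' | h'' | h''
          · exact absurd (h'' ▸ hcbqb) hnbY1
          · exact absurd (h'' ▸ hcbqb) hnbu2
          · exact h'' ▸ hcbqb
        rcases hzcov w hcaw hcbw with h'' | h'' | h''
        · have hmt1 : m = t1 := line_eq hm ht1 hz1Y1 (h'' ▸ hwm) hY1m hz1t1 hY1t1
          rcases covt1' u2 (hmt1 ▸ hu2m) with h3 | h3 | h3
          · exact hnau2 (h3.symm ▸ ca1)
          · exact hu2C h3
          · exact nY1u2 h3.symm
        · have hmt2 : m = t2 := line_eq hm ht2 hu2z2.symm (h'' ▸ hwm) hu2m hz2t2 hu2t2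
          rcases covt2 Y1 (hmt2 ▸ hY1m) with h3 | h3 | h3
          · exact nz2Y1 h3.symm
          · exact hCY1 h3.symm
          · exact nY1u2 h3
        · exact hz3nY1 (collinear_mem hm (h'' ▸ hwm) hY1m nz3Y1)
      have nY1cu3 : ¬ S.Collinear Y1 u3 := by
        intro hc
        obtain ⟨w, m, hm, hY1m, hu3m, hwm, hwY1, hwu3, covm⟩ := third_point hc
        have ham : a ∉ m := fun h => hnaY1 ⟨hY1a.symm, m, hm, h, hY1m⟩
        have hbm : b ∉ m := fun h => hnbY1 ⟨hY1b.symm, m, hm, h, hY1m⟩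
        obtain ⟨qa, hqam, hcaqa⟩ := exists_col hGQ hm ham
        have hcaw : S.Collinear a w := by
          rcases covm qa hqam with h'' | h'' | h''
          · exact absurd (h'' ▸ hcaqa) hnaY1
          · exact absurd (h'' ▸ hcaqa) hnau3
          · exact h'' ▸ hcaqa
        obtain ⟨qb, hqbm, hcbqb⟩ := exists_col hGQ hm hbm
        have hcbw : S.Collinear b w := by
          rcases covm qb hqbm with h'' | h'' | h''
          · exact absurd (h'' ▸ hcbqb) hnbY1
          · exact absurd (h'' ▸ hcbqb) hnbu3
          · exact h'' ▸ hcbqb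
        rcases hzcov w hcaw hcbw with h'' | h'' | h''
        · have hmt1 : m = t1 := line_eq hm ht1 hz1Y1 (h'' ▸ hwm) hY1m hz1t1 hY1t1
          rcases covt1' u3 (hmt1 ▸ hu3m) with h3 | h3 | h3
          · exact hnau3 (h3.symm ▸ ca1)
          · exact hu3C h3
          · exact nY1u3 h3.symm
        · exact hz2nY1 (collinear_mem hm (h'' ▸ hwm) hY1m nz2Y1)
        · have hmt3 : m = t3 := line_eq hm ht3 hu3z3.symm (h'' ▸ hwm) hu3m hz3t3 hu3t3
          rcases covt3 Y1 (hmt3 ▸ hY1m) with h3 | h3 | h3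
          · exact nz3Y1 h3.symm
          · exact hCY1 h3.symm
          · exact nY1u3 h3
      have nu2cu3 : ¬ S.Collinear u2 u3 := by
        intro hc
        obtain ⟨w, m, hm, hu2m, hu3m, hwm, hwu2, hwu3, covm⟩ := third_point hc
        have ham : a ∉ m := fun h => hnau2 ⟨hu2a.symm, m, hm, h, hu2m⟩
        have hbm : b ∉ m := fun h => hnbu2 ⟨hu2b.symm, m, hm, h, hu2m⟩
        obtain ⟨qa, hqam, hcaqa⟩ := exists_col hGQ hm ham
        have hcaw : S.Collinear a w := by
          rcases covm qa hqam with h'' | h'' | h''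
          · exact absurd (h'' ▸ hcaqa) hnau2
          · exact absurd (h'' ▸ hcaqa) hnau3
          · exact h'' ▸ hcaqa
        obtain ⟨qb, hqbm, hcbqb⟩ := exists_col hGQ hm hbm
        have hcbw : S.Collinear b w := by
          rcases covm qb hqbm with h'' | h'' | h''
          · exact absurd (h'' ▸ hcbqb) hnbu2
          · exact absurd (h'' ▸ hcbqb) hnbu3
          · exact h'' ▸ hcbqb
        rcases hzcov w hcaw hcbw with h'' | h'' | h''
        · rcases covz1 m hm (h'' ▸ hwm) with h3 | h3 | h3
          · exact hnau2 ⟨hu2a.symm, m, hm, h3.symm ▸ hala1, hu2m⟩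
          · exact hnbu2 ⟨hu2b.symm, m, hm, h3.symm ▸ hblb1, hu2m⟩
          · rcases covt1' u2 (h3 ▸ hu2m) with h4 | h4 | h4
            · exact hnau2 (h4.symm ▸ ca1)
            · exact hu2C h4
            · exact nY1u2 h4.symm
        · have hmt2 : m = t2 := line_eq hm ht2 hu2z2.symm (h'' ▸ hwm) hu2m hz2t2 hu2t2
          rcases covt2 u3 (hmt2 ▸ hu3m) with h3 | h3 | h3
          · exact hnau3 (h3.symm ▸ ca2)
          · exact hu3C h3
          · exact nu2u3 h3.symm
        · have hmt3 : m = t3 := line_eq hm ht3 hu3z3.symm (h'' ▸ hwm) hu3m hz3t3 hu3t3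
          rcases covt3 u2 (hmt3 ▸ hu2m) with h3 | h3 | h3
          · exact hnau2 (h3.symm ▸ ca3)
          · exact hu2C h3
          · exact nu2u3 h3
      have hsub : ({C, Y1, u2, u3} : Set P) ⊆
          {p : P | p ≠ a ∧ p ≠ b ∧ ¬ S.Collinear a p ∧ ¬ S.Collinear b p} := by
        intro p hp
        rcases hp with rfl | rfl | rfl | rfl
        · exact ⟨hCa, hCb, hnaC, hnbC⟩
        · exact ⟨hY1a, hY1b, hnaY1, hnbY1⟩
        · exact ⟨hu2a, hu2b, hnau2, hnbu2⟩
        · exact ⟨hu3a, hu3b, hnau3, hnbu3⟩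
      have hc4 : ({C, Y1, u2, u3} : Set P).ncard = 4 := by
        rw [Set.ncard_insert_of_notMem (by
            simp only [Set.mem_insert_iff, Set.mem_singleton_iff]; push_neg
            exact ⟨hCY1, hu2C.symm, hu3C.symm⟩),
          Set.ncard_insert_of_notMem (by
            simp only [Set.mem_insert_iff, Set.mem_singleton_iff]; push_neg
            exact ⟨nY1u2, nY1u3⟩),
          Set.ncard_insert_of_notMem (by
            simp only [Set.mem_singleton_iff]
            exact nu2u3),
          Set.ncard_singleton]
      have hNeq : ({C, Y1, u2, u3} : Set P) =
          {p : P | p ≠ a ∧ p ≠ b ∧ ¬ S.Collinear a p ∧ ¬ S.Collinear b p} :=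
        Set.eq_of_subset_of_ncard_le hsub (by rw [hN4, hc4]) (Set.toFinite _)
      refine ⟨C, Y1, u2, u3, ⟨hnaC, hnbC, hCa, hCb⟩, ⟨hnaY1, hnbY1, hY1a, hY1b⟩,
        ⟨hnau2, hnbu2, hu2a, hu2b⟩, ⟨hnau3, hnbu3, hu3a, hu3b⟩,
        hCY1.symm, hu2C, hu3C, nY1u2, nY1u3, nu2u3,
        collinear_mem ht1 hCt1 hY1t1 hCY1, collinear_mem ht2 hCt2 hu2t2 hu2C.symm,
        collinear_mem ht3 hCt3 hu3t3 hu3C.symm, nY1cu2, nY1cu3, nu2cu3, ?_⟩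
      intro d hda hdb hnad hnbd hdC
      have hdN : d ∈ {p : P | p ≠ a ∧ p ≠ b ∧ ¬ S.Collinear a p ∧ ¬ S.Collinear b p} :=
        ⟨hda, hdb, hnad, hnbd⟩
      rw [← hNeq] at hdN
      simp only [Set.mem_insert_iff, Set.mem_singleton_iff] at hdN
      rcases hdN with h4 | h4 | h4 | h4
      exacts [absurd h4 hdC, Or.inl h4, Or.inr (Or.inl h4), Or.inr (Or.inr h4)]
    · -- CASE B : z3 collinear with Y1 (impossible)
      exfalso
      have hz3Y1 : S.Collinear z3 Y1 := h' ▸ hcz3q3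
      have hz3nC : ¬ S.Collinear z3 C := ncol_of_other hGQ ht1 hz3t1 hY1t1 hz3Y1 hCt1 hCY1
      obtain ⟨v, t3, ht3, hz3t3, hY1t3, hvt3, hvz3, hvY1, covt3⟩ := third_point hz3Y1
      have hat3 : a ∉ t3 := fun h => hnaY1 ⟨hY1a.symm, t3, ht3, h, hY1t3⟩
      have hbt3 : b ∉ t3 := fun h => hnbY1 ⟨hY1b.symm, t3, ht3, h, hY1t3⟩
      have hnav : ¬ S.Collinear a v := ncol_of_other hGQ ht3 hat3 hz3t3 ca3 hvt3 hvz3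
      have hnbv : ¬ S.Collinear b v := ncol_of_other hGQ ht3 hbt3 hz3t3 cb3 hvt3 hvz3
      have hva : v ≠ a := fun h => hat3 (h ▸ hvt3)
      have hvb : v ≠ b := fun h => hbt3 (h ▸ hvt3)
      have hvC : v ≠ C := fun h => hz3nC (collinear_mem ht3 hz3t3 (h ▸ hvt3) nz3C)
      have covz3 := lines_cover hGQ hla3 hlb3 ht3 hz3la3 hz3lb3 hz3t3 hab3
        (fun h => hat3 (h ▸ hala3)) (fun h => hbt3 (h ▸ hblb3))
      by_cases hvu2 : v = u2
      · -- triangle case : parity contradiction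
        subst hvu2
        have hex : ∃ w, (w ≠ a ∧ w ≠ b ∧ ¬ S.Collinear a w ∧ ¬ S.Collinear b w) ∧
            w ≠ C ∧ w ≠ Y1 ∧ w ≠ v := by
          by_contra hcon
          push_neg at hcon
          have hsub : {p : P | p ≠ a ∧ p ≠ b ∧ ¬ S.Collinear a p ∧ ¬ S.Collinear b p} ⊆
              ({C, Y1, v} : Set P) := by
            intro p hp
            simp only [Set.mem_insert_iff, Set.mem_singleton_iff]
            by_contra hp3
            push_neg at hp3
            exact hp3.2.2 (hcon p hp hp3.1 hp3.2.1)
          have h1 := Set.ncard_le_ncard hsub (Set.toFinite _)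
          have h2 := Set.ncard_insert_le C ({Y1, v} : Set P)
          have h3 := Set.ncard_insert_le Y1 ({v} : Set P)
          have h4 : ({v} : Set P).ncard = 1 := Set.ncard_singleton v
          omega
        obtain ⟨w, ⟨hwa, hwb, hnaw, hnbw⟩, hwC, hwY1, hwu2⟩ := hex
        have hwt1 : w ∉ t1 := fun h => by
          rcases covt1' w h with h3 | h3 | h3
          · exact hnaw (h3.symm ▸ ca1)
          · exact hwC h3
          · exact hwY1 h3
        have hwt2 : w ∉ t2 := fun h => by
          rcases covt2 w h with h3 | h3 | h3
          · exact hnaw (h3.symm ▸ ca2)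
          · exact hwC h3
          · exact hwu2 h3
        have hwt3 : w ∉ t3 := fun h => by
          rcases covt3 w h with h3 | h3 | h3
          · exact hnaw (h3.symm ▸ ca3)
          · exact hwY1 h3
          · exact hwu2 h3
        have hnwz1 : ¬ S.Collinear w z1 := by
          intro hc
          obtain ⟨hne', m, hm, hwm, hz1m⟩ := hc
          rcases covz1 m hm hz1m with h3 | h3 | h3
          · exact hnaw ⟨hwa.symm, m, hm, h3.symm ▸ hala1, hwm⟩
          · exact hnbw ⟨hwb.symm, m, hm, h3.symm ▸ hblb1, hwm⟩
          · exact hwt1 (h3 ▸ hwm)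
        have hnwz2 : ¬ S.Collinear w z2 := by
          intro hc
          obtain ⟨hne', m, hm, hwm, hz2m⟩ := hc
          rcases covz2 m hm hz2m with h3 | h3 | h3
          · exact hnaw ⟨hwa.symm, m, hm, h3.symm ▸ hala2, hwm⟩
          · exact hnbw ⟨hwb.symm, m, hm, h3.symm ▸ hblb2, hwm⟩
          · exact hwt2 (h3 ▸ hwm)
        have hnwz3 : ¬ S.Collinear w z3 := by
          intro hc
          obtain ⟨hne', m, hm, hwm, hz3m⟩ := hc
          rcases covz3 m hm hz3m with h3 | h3 | h3
          · exact hnaw ⟨hwa.symm, m, hm, h3.symm ▸ hala3, hwm⟩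
          · exact hnbw ⟨hwb.symm, m, hm, h3.symm ▸ hblb3, hwm⟩
          · exact hwt3 (h3 ▸ hwm)
        have d1 : (S.Collinear w C ∧ ¬ S.Collinear w Y1) ∨
            (¬ S.Collinear w C ∧ S.Collinear w Y1) := by
          obtain ⟨p, hpm, hcp⟩ := exists_col hGQ ht1 hwt1
          rcases covt1' p hpm with h3 | h3 | h3
          · exact absurd (h3 ▸ hcp) hnwz1
          · have hcC : S.Collinear w C := h3 ▸ hcp
            exact Or.inl ⟨hcC, ncol_of_other hGQ ht1 hwt1 hCt1 hcC hY1t1 hCY1.symm⟩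
          · have hcY : S.Collinear w Y1 := h3 ▸ hcp
            exact Or.inr ⟨ncol_of_other hGQ ht1 hwt1 hY1t1 hcY hCt1 hCY1, hcY⟩
        have d2 : (S.Collinear w C ∧ ¬ S.Collinear w v) ∨
            (¬ S.Collinear w C ∧ S.Collinear w v) := by
          obtain ⟨p, hpm, hcp⟩ := exists_col hGQ ht2 hwt2
          rcases covt2 p hpm with h3 | h3 | h3
          · exact absurd (h3 ▸ hcp) hnwz2
          · have hcC : S.Collinear w C := h3 ▸ hcp
            exact Or.inl ⟨hcC, ncol_of_other hGQ ht2 hwt2 hCt2 hcC hu2t2 hu2C⟩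
          · have hcU : S.Collinear w v := h3 ▸ hcp
            exact Or.inr ⟨ncol_of_other hGQ ht2 hwt2 hu2t2 hcU hCt2 hu2C.symm, hcU⟩
        have d3 : (S.Collinear w Y1 ∧ ¬ S.Collinear w v) ∨
            (¬ S.Collinear w Y1 ∧ S.Collinear w v) := by
          obtain ⟨p, hpm, hcp⟩ := exists_col hGQ ht3 hwt3
          rcases covt3 p hpm with h3 | h3 | h3
          · exact absurd (h3 ▸ hcp) hnwz3
          · have hcY : S.Collinear w Y1 := h3 ▸ hcp
            exact Or.inl ⟨hcY, ncol_of_other hGQ ht3 hwt3 hY1t3 hcY hvt3 hvY1⟩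
          · have hcU : S.Collinear w v := h3 ▸ hcp
            exact Or.inr ⟨ncol_of_other hGQ ht3 hwt3 hvt3 hcU hY1t3 hvY1.symm, hcU⟩
        tauto
      · -- path case : u2 has no collinear point on t3
        have hu2t3 : u2 ∉ t3 := fun h => by
          rcases covt3 u2 h with h3 | h3 | h3
          · exact hnau2 (h3.symm ▸ ca3)
          · exact nY1u2 h3.symm
          · exact hvu2 h3.symm
        obtain ⟨q, hqt3, hcq⟩ := exists_col hGQ ht3 hu2t3
        rcases covt3 q hqt3 with h3 | h3 | h3
        · -- q = z3
          have hcz : S.Collinear u2 z3 := h3 ▸ hcq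
          obtain ⟨hne', m, hm, hu2m, hz3m⟩ := hcz
          rcases covz3 m hm hz3m with h4 | h4 | h4
          · exact hnau2 ⟨hu2a.symm, m, hm, h4.symm ▸ hala3, hu2m⟩
          · exact hnbu2 ⟨hu2b.symm, m, hm, h4.symm ▸ hblb3, hu2m⟩
          · exact hu2t3 (h4 ▸ hu2m)
        · -- q = Y1
          have hc : S.Collinear Y1 u2 := (h3 ▸ hcq).symm'
          obtain ⟨w, m, hm, hY1m, hu2m, hwm, hwY1, hwu2, covm⟩ := third_point hc
          have ham : a ∉ m := fun h => hnaY1 ⟨hY1a.symm, m, hm, h, hY1m⟩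
          have hbm : b ∉ m := fun h => hnbY1 ⟨hY1b.symm, m, hm, h, hY1m⟩
          obtain ⟨qa, hqam, hcaqa⟩ := exists_col hGQ hm ham
          have hcaw : S.Collinear a w := by
            rcases covm qa hqam with h'' | h'' | h''
            · exact absurd (h'' ▸ hcaqa) hnaY1
            · exact absurd (h'' ▸ hcaqa) hnau2
            · exact h'' ▸ hcaqa
          obtain ⟨qb, hqbm, hcbqb⟩ := exists_col hGQ hm hbm
          have hcbw : S.Collinear b w := by
            rcases covm qb hqbm with h'' | h'' | h''
            · exact absurd (h'' ▸ hcbqb) hnbY1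
            · exact absurd (h'' ▸ hcbqb) hnbu2
            · exact h'' ▸ hcbqb
          rcases hzcov w hcaw hcbw with h'' | h'' | h''
          · have hmt1 : m = t1 := line_eq hm ht1 hz1Y1 (h'' ▸ hwm) hY1m hz1t1 hY1t1
            rcases covt1' u2 (hmt1 ▸ hu2m) with h4 | h4 | h4
            · exact hnau2 (h4.symm ▸ ca1)
            · exact hu2C h4
            · exact nY1u2 h4.symm
          · have hmt2 : m = t2 := line_eq hm ht2 hu2z2.symm (h'' ▸ hwm) hu2m hz2t2 hu2t2
            rcases covt2 Y1 (hmt2 ▸ hY1m) with h4 | h4 | h4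
            · exact nz2Y1 h4.symm
            · exact hCY1 h4.symm
            · exact nY1u2 h4
          · have hmt3 : m = t3 := line_eq hm ht3 nz3Y1 (h'' ▸ hwm) hY1m hz3t3 hY1t3
            exact hu2t3 (hmt3 ▸ hu2m)
        · -- q = v
          have hc : S.Collinear u2 v := h3 ▸ hcq
          obtain ⟨w, m, hm, hu2m, hvm, hwm, hwu2, hwv, covm⟩ := third_point hc
          have ham : a ∉ m := fun h => hnau2 ⟨hu2a.symm, m, hm, h, hu2m⟩
          have hbm : b ∉ m := fun h => hnbu2 ⟨hu2b.symm, m, hm, h, hu2m⟩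
          obtain ⟨qa, hqam, hcaqa⟩ := exists_col hGQ hm ham
          have hcaw : S.Collinear a w := by
            rcases covm qa hqam with h'' | h'' | h''
            · exact absurd (h'' ▸ hcaqa) hnau2
            · exact absurd (h'' ▸ hcaqa) hnav
            · exact h'' ▸ hcaqa
          obtain ⟨qb, hqbm, hcbqb⟩ := exists_col hGQ hm hbm
          have hcbw : S.Collinear b w := by
            rcases covm qb hqbm with h'' | h'' | h''
            · exact absurd (h'' ▸ hcbqb) hnbu2
            · exact absurd (h'' ▸ hcbqb) hnbv
            · exact h'' ▸ hcbqb
          rcases hzcov w hcaw hcbw with h'' | h'' | h''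
          · rcases covz1 m hm (h'' ▸ hwm) with h4 | h4 | h4
            · exact hnau2 ⟨hu2a.symm, m, hm, h4.symm ▸ hala1, hu2m⟩
            · exact hnbu2 ⟨hu2b.symm, m, hm, h4.symm ▸ hblb1, hu2m⟩
            · rcases covt1' u2 (h4 ▸ hu2m) with h5 | h5 | h5
              · exact hnau2 (h5.symm ▸ ca1)
              · exact hu2C h5
              · exact nY1u2 h5.symm
          · have hmt2 : m = t2 := line_eq hm ht2 hu2z2.symm (h'' ▸ hwm) hu2m hz2t2 hu2t2
            rcases covt2 v (hmt2 ▸ hvm) with h4 | h4 | h4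
            · exact hnav (h4.symm ▸ ca2)
            · exact hvC h4
            · exact hvu2 h4
          · have hmt3 : m = t3 := line_eq hm ht3 hvz3.symm (h'' ▸ hwm) hvm hz3t3 hvt3
            exact hu2t3 (hmt3 ▸ hu2m)
  rcases covt1 q1 hq1t1 with h' | h' | h'
  · exact absurd (h' ▸ hcz2q1) (ncol_symm nc12)
  · exact key X Y hXt1 hYt1 hz1X hz1Y hXY covt1 hnaX hnbX hXa hXb hnaY hnbY hYa hYb
      (h' ▸ hcz2q1)
  · exact key Y X hYt1 hXt1 hz1Y hz1X hXY.symm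
      (fun w hw => by rcases covt1 w hw with h | h | h <;> tauto)
      hnaY hnbY hYa hYb hnaX hnbX hXa hXb (h' ▸ hcz2q1)

end Star

end SlimPLS
namespace SlimPLS

section Arcs

variable {P : Type*} {S : SlimPLS P}

lemma isArc3 {p1 p2 p3 : P} (h12 : ¬ S.Collinear p1 p2) (h13 : ¬ S.Collinear p1 p3)
    (h23 : ¬ S.Collinear p2 p3) : S.IsArc {p1, p2, p3} := by
  intro x hx y hy hxy
  simp only [Set.mem_insert_iff, Set.mem_singleton_iff] at hx hy
  rcases hx with rfl | rfl | rfl <;> rcases hy with rfl | rfl | rfl <;>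
    first
      | exact absurd rfl hxy
      | assumption
      | exact ncol_symm h12
      | exact ncol_symm h13
      | exact ncol_symm h23

lemma isArc4 {p1 p2 p3 p4 : P} (h12 : ¬ S.Collinear p1 p2) (h13 : ¬ S.Collinear p1 p3)
    (h14 : ¬ S.Collinear p1 p4) (h23 : ¬ S.Collinear p2 p3) (h24 : ¬ S.Collinear p2 p4)
    (h34 : ¬ S.Collinear p3 p4) : S.IsArc {p1, p2, p3, p4} := by
  intro x hx y hy hxy
  simp only [Set.mem_insert_iff, Set.mem_singleton_iff] at hx hy
  rcases hx with rfl | rfl | rfl | rfl <;> rcases hy with rfl | rfl | rfl | rfl <;>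
    first
      | exact absurd rfl hxy
      | assumption
      | exact ncol_symm h12
      | exact ncol_symm h13
      | exact ncol_symm h14
      | exact ncol_symm h23
      | exact ncol_symm h24
      | exact ncol_symm h34

variable (hGQ : S.IsGQ 2)
include hGQ

lemma exists_complete3arc {x y : P} (hxy : x ≠ y) (hc : ¬ S.Collinear x y) :
    ∃ c, S.Complete3Arc x y c := by
  obtain ⟨c, y1, y2, y3, ⟨hnaC, hnbC, hCa, hCb⟩, ⟨hna1, hnb1, h1a, h1b⟩, ⟨hna2, hnb2, h2a, h2b⟩,
    ⟨hna3, hnb3, h3a, h3b⟩, h1c, h2c, h3c, h12, h13, h23, hc1, hc2, hc3, n12, n13, n23, hcov⟩ :=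
    star hGQ hc hxy
  refine ⟨c, hxy, hCa.symm.symm.symm, hCb.symm.symm.symm, isArc3 hc hnaC hnbC, ?_⟩
  · intro d hd hArc
    simp only [Set.mem_insert_iff, Set.mem_singleton_iff] at hd
    push_neg at hd
    obtain ⟨hdx, hdy, hdc⟩ := hd
    by_cases hcxd : S.Collinear x d
    · exact hArc x (by simp) d (by simp) hcxd.ne.symm.symm hcxd
    by_cases hcyd : S.Collinear y d
    · exact hArc y (by simp) d (by simp) hcyd.ne.symm.symm hcyd
    rcases hcov d hdx hdy hcxd hcyd hdc with rfl | rfl | rfl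
    · exact hArc c (by simp) d (by simp) h1c.symm hc1
    · exact hArc c (by simp) d (by simp) h2c.symm hc2
    · exact hArc c (by simp) d (by simp) h3c.symm hc3

lemma complete_center {a b c : P} (hC : S.Complete3Arc a b c) :
    ∃ y1 y2 y3 : P,
      (¬ S.Collinear a y1 ∧ ¬ S.Collinear b y1 ∧ y1 ≠ a ∧ y1 ≠ b) ∧
      (¬ S.Collinear a y2 ∧ ¬ S.Collinear b y2 ∧ y2 ≠ a ∧ y2 ≠ b) ∧
      (¬ S.Collinear a y3 ∧ ¬ S.Collinear b y3 ∧ y3 ≠ a ∧ y3 ≠ b) ∧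
      y1 ≠ c ∧ y2 ≠ c ∧ y3 ≠ c ∧ y1 ≠ y2 ∧ y1 ≠ y3 ∧ y2 ≠ y3 ∧
      ¬ S.Collinear y1 y2 ∧ ¬ S.Collinear y1 y3 ∧ ¬ S.Collinear y2 y3 ∧
      ∀ d : P, d ≠ a → d ≠ b → ¬ S.Collinear a d → ¬ S.Collinear b d → d ≠ c →
        d = y1 ∨ d = y2 ∨ d = y3 := by
  obtain ⟨hab, hac, hbc, hArc, hmax⟩ := hC
  have ma : a ∈ ({a, b, c} : Set P) := by simp
  have mb : b ∈ ({a, b, c} : Set P) := by simp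
  have mc : c ∈ ({a, b, c} : Set P) := by simp
  have hnab : ¬ S.Collinear a b := hArc a ma b mb hab
  have hnac : ¬ S.Collinear a c := hArc a ma c mc hac
  have hnbc : ¬ S.Collinear b c := hArc b mb c mc hbc
  obtain ⟨c', y1, y2, y3, ⟨hnaC, hnbC, hCa, hCb⟩, ⟨hna1, hnb1, h1a, h1b⟩,
    ⟨hna2, hnb2, h2a, h2b⟩, ⟨hna3, hnb3, h3a, h3b⟩, h1c, h2c, h3c, h12, h13, h23,
    hc1, hc2, hc3, n12, n13, n23, hcov⟩ := star hGQ hnab hab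
  by_cases hcc : c = c'
  · subst hcc
    exact ⟨y1, y2, y3, ⟨hna1, hnb1, h1a, h1b⟩, ⟨hna2, hnb2, h2a, h2b⟩,
      ⟨hna3, hnb3, h3a, h3b⟩, h1c, h2c, h3c, h12, h13, h23, n12, n13, n23, hcov⟩
  exfalso
  have hca : c ≠ a := fun h => hac h.symm
  have hcb : c ≠ b := fun h => hbc h.symm
  have hkey : ∀ e : P, ¬ S.Collinear a e → ¬ S.Collinear b e → ¬ S.Collinear c e →
      e ≠ a → e ≠ b → e ≠ c → False := by
    intro e hnae hnbe hnce hea heb hec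
    refine hmax e ?_ (isArc4 (ncol_symm hnae) (ncol_symm hnbe) (ncol_symm hnce) hnab hnac hnbc)
    simp only [Set.mem_insert_iff, Set.mem_singleton_iff]
    push_neg
    exact ⟨hea, heb, hec⟩
  rcases hcov c hca hcb hnac hnbc hcc with rfl | rfl | rfl
  · exact hkey y2 hna2 hnb2 n12 h2a h2b h12.symm
  · exact hkey y1 hna1 hnb1 (ncol_symm n12) h1a h1b h12
  · exact hkey y1 hna1 hnb1 (ncol_symm n13) h1a h1b h13
end Arcs

end SlimPLS
namespace SlimPLS

section RepBasic

variable {P : Type*} {S : SlimPLS P} {R : Type*} [Group R] (ρ : S.Rep R)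

lemma rep_ne_one (x : P) : ρ.r x ≠ 1 := by
  intro h
  have h2 := ρ.order_two x
  rw [h, orderOf_one] at h2
  exact absurd h2 (by norm_num)

lemma rep_sq (x : P) : ρ.r x * ρ.r x = 1 := by
  have h := pow_orderOf_eq_one (ρ.r x)
  rw [ρ.order_two x, pow_two] at h
  exact h

lemma rep_line {x y z : P} {l : Finset P} (hl : l ∈ S.lines) (hx : x ∈ l) (hy : y ∈ l)
    (hz : z ∈ l) (hxy : x ≠ y) (hxz : x ≠ z) (hyz : y ≠ z) : ρ.r x * ρ.r y = ρ.r z :=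
  ρ.line_rel l hl x hx y hy z hz hxy hxz hyz

lemma phi_ncol (hf : Function.Injective ρ.r) {x y w : P} (hw : ρ.r w = ρ.r x * ρ.r y)
    (hxy : x ≠ y) (hncol : ¬ S.Collinear x y) :
    ¬ S.Collinear x w ∧ ¬ S.Collinear w y := by
  constructor
  · intro hc
    obtain ⟨z, l, hl, hxl, hwl, hzl, hzx, hzw, -⟩ := third_point hc
    have hline : ρ.r x * ρ.r w = ρ.r z := rep_line ρ hl hxl hwl hzl hc.ne hzx.symm hzw.symm
    have hzy : z = y := hf (by rw [← hline, hw, ← mul_assoc, rep_sq, one_mul])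
    exact hncol (collinear_mem hl hxl (hzy ▸ hzl) hxy)
  · intro hc
    obtain ⟨z, l, hl, hwl, hyl, hzl, hzw, hzy, -⟩ := third_point hc
    have hline : ρ.r w * ρ.r y = ρ.r z := rep_line ρ hl hwl hyl hzl hc.ne hzw.symm hzy.symm
    have hzx : z = x := hf (by rw [← hline, hw, mul_assoc, rep_sq, mul_one])
    exact hncol (collinear_mem hl (hzx ▸ hzl) hyl hxy)

variable (hGQ : S.IsGQ 2)
include hGQ

lemma elim_line (hf : Function.Injective ρ.r) {x y z e : P} (hxy : S.Collinear x y)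
    (hz : ρ.r z = ρ.r x * ρ.r y)
    (hex : ¬ S.Collinear e x) (hey : ¬ S.Collinear e y) (hez : ¬ S.Collinear e z)
    (hnex : e ≠ x) (hney : e ≠ y) (hnez : e ≠ z) : False := by
  obtain ⟨w, l, hl, hxl, hyl, hwl, hwx, hwy, hcovl⟩ := third_point hxy
  have hline : ρ.r x * ρ.r y = ρ.r w := rep_line ρ hl hxl hyl hwl hxy.ne hwx.symm hwy.symm
  have hwz : w = z := hf (hline.symm.trans hz.symm)
  subst hwz
  have helt : e ∉ l := fun h => by
    rcases hcovl e h with h' | h' | h'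
    · exact hnex h'
    · exact hney h'
    · exact hnez h'
  obtain ⟨p', hp', hcp'⟩ := exists_col hGQ hl helt
  rcases hcovl p' hp' with h' | h' | h'
  · exact hex (h' ▸ hcp')
  · exact hey (h' ▸ hcp')
  · exact hez (h' ▸ hcp')

omit ρ in
lemma four_lines {t : P} {l : Finset P} (hl : l ∈ S.lines) (htl : t ∈ l) {g1 g2 g3 : P}
    (h1l : g1 ∉ l) (h2l : g2 ∉ l) (h3l : g3 ∉ l)
    (h12 : g1 ≠ g2) (h13 : g1 ≠ g3) (h23 : g2 ≠ g3)
    (nc12 : ¬ S.Collinear g1 g2) (nc13 : ¬ S.Collinear g1 g3) (nc23 : ¬ S.Collinear g2 g3)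
    (c1 : S.Collinear g1 t) (c2 : S.Collinear g2 t) (c3 : S.Collinear g3 t) : False := by
  obtain ⟨ne1, n1, hn1, hg1n1, htn1⟩ := c1
  obtain ⟨ne2, n2, hn2, hg2n2, htn2⟩ := c2
  obtain ⟨ne3, n3, hn3, hg3n3, htn3⟩ := c3
  have d1l : n1 ≠ l := fun h => h1l (h ▸ hg1n1)
  have d2l : n2 ≠ l := fun h => h2l (h ▸ hg2n2)
  have d3l : n3 ≠ l := fun h => h3l (h ▸ hg3n3)
  have d12 : n1 ≠ n2 := fun h => nc12 (collinear_mem hn1 hg1n1 (h.symm ▸ hg2n2) h12)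
  have d13 : n1 ≠ n3 := fun h => nc13 (collinear_mem hn1 hg1n1 (h.symm ▸ hg3n3) h13)
  have d23 : n2 ≠ n3 := fun h => nc23 (collinear_mem hn2 hg2n2 (h.symm ▸ hg3n3) h23)
  obtain ⟨m1, m2, m3, -, -, -, -, -, -, -, -, -, hcov⟩ := three_lines hGQ t
  have e0 := hcov l hl htl
  have e1 := hcov n1 hn1 htn1
  have e2 := hcov n2 hn2 htn2
  have e3 := hcov n3 hn3 htn3
  rcases e0 with rfl | rfl | rfl <;> rcases e1 with h1 | h1 | h1 <;>
    rcases e2 with h2 | h2 | h2 <;> rcases e3 with h3 | h3 | h3 <;>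
    first
      | exact d1l h1
      | exact d2l h2
      | exact d3l h3
      | exact d12 (h1.trans h2.symm)
      | exact d13 (h1.trans h3.symm)
      | exact d23 (h2.trans h3.symm)

end RepBasic

end SlimPLS
section Main

open SlimPLS

lemma card_of_rel {P : Type*} {S : SlimPLS P} (hGQ : S.IsGQ 2) {R : Type*} [Group R]
    (ρ : S.Rep R) (hf : Function.Injective ρ.r)
    (hrel : ∀ a b c : P, S.Complete3Arc a b c → ρ.r a * ρ.r b * ρ.r c = 1) :
    Nat.card R = 2 ^ 4 := by
  classical
  obtain ⟨a0⟩ := S.nonempty_pts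
  obtain ⟨W0, -, -, hP15⟩ := base_enum hGQ a0
  have hfinP : Finite P := Nat.finite_of_card_ne_zero (by omega)
  have hKmul : ∀ g h : R, g ∈ insert (1:R) (Set.range ρ.r) →
      h ∈ insert (1:R) (Set.range ρ.r) → g * h ∈ insert (1:R) (Set.range ρ.r) := by
    intro g h hg hh
    simp only [Set.mem_insert_iff, Set.mem_range] at hg hh ⊢
    rcases hg with rfl | ⟨x, rfl⟩
    · simpa using hh
    rcases hh with rfl | ⟨y, rfl⟩
    · simp
    by_cases hxy : x = y
    · subst hxy; exact Or.inl (rep_sq ρ x)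
    by_cases hcol : S.Collinear x y
    · obtain ⟨z, l, hl, hxl, hyl, hzl, hzx, hzy, -⟩ := third_point hcol
      exact Or.inr ⟨z, (rep_line ρ hl hxl hyl hzl hxy hzx.symm hzy.symm).symm⟩
    · obtain ⟨c, hc⟩ := exists_complete3arc hGQ hxy hcol
      have h1 := hrel x y c hc
      have h2 : ρ.r x * ρ.r y = (ρ.r c)⁻¹ := eq_inv_of_mul_eq_one_left h1
      have h3 : (ρ.r c)⁻¹ = ρ.r c := inv_eq_of_mul_eq_one_right (rep_sq ρ c)
      exact Or.inr ⟨c, (h2.trans h3).symm⟩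
  let K : Subgroup R :=
    { carrier := insert (1:R) (Set.range ρ.r)
      one_mem' := Set.mem_insert _ _
      mul_mem' := fun hg hh => hKmul _ _ hg hh
      inv_mem' := by
        intro g hg
        simp only [Set.mem_insert_iff, Set.mem_range] at hg ⊢
        rcases hg with rfl | ⟨x, rfl⟩
        · exact Or.inl inv_one
        · exact Or.inr ⟨x, (inv_eq_of_mul_eq_one_right (rep_sq ρ x)).symm⟩ }
  have hsub : Set.range ρ.r ⊆ K.carrier := fun g hg => Set.mem_insert_of_mem _ hg
  have htop : K = ⊤ := by
    have h1 : Subgroup.closure (Set.range ρ.r) ≤ K := (Subgroup.closure_le K).mpr hsub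
    rw [ρ.gen] at h1
    exact top_le_iff.mp h1
  have huniv : (Set.univ : Set R) = insert (1:R) (Set.range ρ.r) := by
    refine (Set.eq_univ_of_forall ?_).symm
    intro g
    have hg : g ∈ K := htop.symm ▸ Subgroup.mem_top g
    exact hg
  have hone : (1:R) ∉ Set.range ρ.r := by rintro ⟨x, hx⟩; exact rep_ne_one ρ x hx
  have hrange : (Set.range ρ.r).ncard = 15 := by
    rw [← Set.image_univ, Set.ncard_image_of_injective _ hf, Set.ncard_univ, hP15]
  have hfin : (Set.range ρ.r).Finite := Set.finite_range _
  calc Nat.card R = (Set.univ : Set R).ncard := (Set.ncard_univ R).symm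
  _ = (insert (1:R) (Set.range ρ.r)).ncard := by rw [huniv]
  _ = 15 + 1 := by rw [Set.ncard_insert_of_notMem hone hfin, hrange]
  _ = 2 ^ 4 := by norm_num

end Main
section Main2

open SlimPLS

set_option maxHeartbeats 4000000 in
lemma rel_of_card {P : Type*} {S : SlimPLS P} (hGQ : S.IsGQ 2) {R : Type*} [Group R]
    (ρ : S.Rep R) (hf : Function.Injective ρ.r) (hcard : Nat.card R = 2 ^ 4) :
    ∀ a b c : P, S.Complete3Arc a b c → ρ.r a * ρ.r b * ρ.r c = 1 := by
  classical
  obtain ⟨a0⟩ := S.nonempty_pts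
  obtain ⟨W0, -, -, hP15⟩ := base_enum hGQ a0
  have hfinP : Finite P := Nat.finite_of_card_ne_zero (by omega)
  have hfinR : Finite R := Nat.finite_of_card_ne_zero (by rw [hcard]; norm_num)
  have hsurj : ∀ g : R, g ≠ 1 → ∃ x : P, ρ.r x = g := by
    have hsub : Set.range ρ.r ⊆ {g : R | g ≠ 1} := by rintro g ⟨x, rfl⟩; exact rep_ne_one ρ x
    have h1 : (Set.range ρ.r).ncard = 15 := by
      rw [← Set.image_univ, Set.ncard_image_of_injective _ hf, Set.ncard_univ, hP15]
    have h2 : {g : R | g ≠ 1}.ncard = 15 := by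
      have he : {g : R | g ≠ 1} = Set.univ \ {1} := by ext g; simp
      rw [he, Set.ncard_diff (Set.subset_univ _), Set.ncard_univ, hcard, Set.ncard_singleton]
      norm_num
    have heq := Set.eq_of_subset_of_ncard_le hsub (le_of_eq (h2.trans h1.symm)) (Set.toFinite _)
    intro g hg
    have hm : g ∈ Set.range ρ.r := heq.symm ▸ (hg : g ∈ {g : R | g ≠ 1})
    exact hm
  have hsq : ∀ g : R, g * g = 1 := by
    intro g
    by_cases hg : g = 1
    · rw [hg, one_mul]
    · obtain ⟨x, rfl⟩ := hsurj g hg; exact rep_sq ρ x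
  have hcomm : ∀ g h : R, g * h = h * g := by
    intro g h
    have h1 : (g * h) * (h * g) = 1 := by
      rw [mul_assoc, ← mul_assoc h h g, hsq, one_mul, hsq]
    have h2 := hsq (g * h)
    exact (mul_left_cancel (h1.trans h2.symm)).symm
  have mulq : ∀ g h k : R, g * (h * k) = h * (g * k) := fun g h k => by
    rw [← mul_assoc, hcomm g h, mul_assoc]
  have mulq2 : ∀ g k : R, g * (g * k) = k := fun g k => by rw [← mul_assoc, hsq, one_mul]
  have hne2 : ∀ x y z : P, ρ.r x * ρ.r y = ρ.r z → x ≠ y := by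
    intro x y z h heq
    subst heq
    exact rep_ne_one ρ z (h.symm.trans (hsq _))
  have hprod_ne : ∀ x y : P, x ≠ y → ρ.r x * ρ.r y ≠ 1 := by
    intro x y hxy h
    have h2 : (ρ.r y)⁻¹ = ρ.r y := inv_eq_of_mul_eq_one_right (rep_sq ρ y)
    exact hxy (hf ((eq_inv_of_mul_eq_one_left h).trans h2))
  intro a b c hC
  obtain ⟨hab, hac, hbc, hArc, -⟩ := id hC
  have hnab : ¬ S.Collinear a b := hArc a (by simp) b (by simp) hab
  obtain ⟨y1, y2, y3, ⟨hna1, hnb1, h1a, h1b⟩, ⟨hna2, hnb2, h2a, h2b⟩, ⟨hna3, hnb3, h3a, h3b⟩,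
    h1c, h2c, h3c, h12, h13, h23, n12, n13, n23, hcov⟩ := complete_center hGQ hC
  obtain ⟨d, hd⟩ := hsurj _ (hprod_ne a b hab)
  by_cases hdc : d = c
  · subst hdc; rw [← hd]; exact hsq _
  exfalso
  obtain ⟨hnad, hndb⟩ := phi_ncol ρ hf hd hab hnab
  have hnbd : ¬ S.Collinear b d := ncol_symm hndb
  have hda : d ≠ a := fun h => rep_ne_one ρ b
    (mul_left_cancel (show ρ.r a * 1 = ρ.r a * ρ.r b by rw [mul_one]; exact h ▸ hd)).symm
  have hdb : d ≠ b := fun h => rep_ne_one ρ a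
    (mul_right_cancel (show (1:R) * ρ.r b = ρ.r a * ρ.r b by rw [one_mul]; exact h ▸ hd)).symm
  have work : ∀ e : P, ¬ S.Collinear a e → ¬ S.Collinear b e → ¬ S.Collinear d e →
      e ≠ a → e ≠ b → e ≠ d → False := by
    intro e hnae hnbe hnde hea heb hed
    obtain ⟨p, hp⟩ := hsurj _ (hprod_ne a e hea.symm)
    obtain ⟨q, hq⟩ := hsurj _ (hprod_ne b e heb.symm)
    obtain ⟨s, hs⟩ := hsurj _ (hprod_ne d e hed.symm)
    obtain ⟨hnap, hnpe⟩ := phi_ncol ρ hf hp hea.symm hnae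
    obtain ⟨hnbq, hnqe⟩ := phi_ncol ρ hf hq heb.symm hnbe
    obtain ⟨hnds, hnse⟩ := phi_ncol ρ hf hs hed.symm hnde
    have nce_a : ¬ S.Collinear e a := ncol_symm hnae
    have nce_b : ¬ S.Collinear e b := ncol_symm hnbe
    have nce_d : ¬ S.Collinear e d := ncol_symm hnde
    have nce_p : ¬ S.Collinear e p := ncol_symm hnpe
    have nce_q : ¬ S.Collinear e q := ncol_symm hnqe
    have nce_s : ¬ S.Collinear e s := ncol_symm hnse
    have hv_ap : ρ.r a * ρ.r p = ρ.r e := by rw [hp, mulq2]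
    have hv_aq : ρ.r a * ρ.r q = ρ.r s := by rw [hq, hs, hd, ← mul_assoc]
    have hv_as : ρ.r a * ρ.r s = ρ.r q := by rw [hs, hd, hq, mul_assoc, mulq2]
    have hv_bp : ρ.r b * ρ.r p = ρ.r s := by
      rw [hp, hs, hd, mulq (ρ.r b) (ρ.r a) (ρ.r e), ← mul_assoc]
    have hv_bq : ρ.r b * ρ.r q = ρ.r e := by rw [hq, mulq2]
    have hv_bs : ρ.r b * ρ.r s = ρ.r p := by
      rw [hs, hd, hp, mul_assoc, mulq (ρ.r b) (ρ.r a) (ρ.r b * ρ.r e), mulq2]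
    have hv_dp : ρ.r d * ρ.r p = ρ.r q := by
      rw [hd, hp, hq, mul_assoc, mulq (ρ.r b) (ρ.r a) (ρ.r e), mulq2]
    have hv_dq : ρ.r d * ρ.r q = ρ.r p := by rw [hd, hq, hp, mul_assoc, mulq2]
    have hv_ds : ρ.r d * ρ.r s = ρ.r e := by rw [hs, mulq2]
    have hv_ep : ρ.r e * ρ.r p = ρ.r a := by rw [hp, mulq (ρ.r e) (ρ.r a) (ρ.r e), hsq, mul_one]
    have hv_eq : ρ.r e * ρ.r q = ρ.r b := by rw [hq, mulq (ρ.r e) (ρ.r b) (ρ.r e), hsq, mul_one]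
    have hv_es : ρ.r e * ρ.r s = ρ.r d := by rw [hs, mulq (ρ.r e) (ρ.r d) (ρ.r e), hsq, mul_one]
    have hv_pq : ρ.r p * ρ.r q = ρ.r d := by
      rw [hp, hq, mul_assoc, mulq (ρ.r e) (ρ.r b) (ρ.r e), hsq, mul_one, ← hd]
    have hv_ps : ρ.r p * ρ.r s = ρ.r b := by
      rw [hp, hs, hd, mul_assoc, mulq (ρ.r e) (ρ.r a * ρ.r b) (ρ.r e), hsq, mul_one, mulq2]
    have hv_qs : ρ.r q * ρ.r s = ρ.r a := by
      rw [hq, hs, hd, mul_assoc, mulq (ρ.r e) (ρ.r a * ρ.r b) (ρ.r e), hsq, mul_one,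
        mulq (ρ.r b) (ρ.r a) (ρ.r b), hsq, mul_one]
    have pne_ap : a ≠ p := hne2 a p e hv_ap
    have pne_aq : a ≠ q := hne2 a q s hv_aq
    have pne_as : a ≠ s := hne2 a s q hv_as
    have pne_bp : b ≠ p := hne2 b p s hv_bp
    have pne_bq : b ≠ q := hne2 b q e hv_bq
    have pne_bs : b ≠ s := hne2 b s p hv_bs
    have pne_dp : d ≠ p := hne2 d p q hv_dp
    have pne_dq : d ≠ q := hne2 d q p hv_dq
    have pne_ds : d ≠ s := hne2 d s e hv_ds
    have pne_ep : e ≠ p := hne2 e p a hv_ep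
    have pne_eq : e ≠ q := hne2 e q b hv_eq
    have pne_es : e ≠ s := hne2 e s d hv_es
    have pne_pq : p ≠ q := hne2 p q d hv_pq
    have pne_ps : p ≠ s := hne2 p s b hv_ps
    have pne_qs : q ≠ s := hne2 q s a hv_qs
    have nc_aq : ¬ S.Collinear a q := fun hcol =>
      elim_line ρ hGQ hf hcol hv_aq.symm nce_a nce_q nce_s hea pne_eq pne_es
    have nc_as : ¬ S.Collinear a s := fun hcol =>
      elim_line ρ hGQ hf hcol hv_as.symm nce_a nce_s nce_q hea pne_es pne_eq
    have nc_bp : ¬ S.Collinear b p := fun hcol =>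
      elim_line ρ hGQ hf hcol hv_bp.symm nce_b nce_p nce_s heb pne_ep pne_es
    have nc_bs : ¬ S.Collinear b s := fun hcol =>
      elim_line ρ hGQ hf hcol hv_bs.symm nce_b nce_s nce_p heb pne_es pne_ep
    have nc_dp : ¬ S.Collinear d p := fun hcol =>
      elim_line ρ hGQ hf hcol hv_dp.symm nce_d nce_p nce_q hed pne_ep pne_eq
    have nc_dq : ¬ S.Collinear d q := fun hcol =>
      elim_line ρ hGQ hf hcol hv_dq.symm nce_d nce_q nce_p hed pne_eq pne_ep
    have nc_pq : ¬ S.Collinear p q := fun hcol =>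
      elim_line ρ hGQ hf hcol hv_pq.symm nce_p nce_q nce_d pne_ep pne_eq hed
    have nc_ps : ¬ S.Collinear p s := fun hcol =>
      elim_line ρ hGQ hf hcol hv_ps.symm nce_p nce_s nce_b pne_ep pne_es heb
    have nc_qs : ¬ S.Collinear q s := fun hcol =>
      elim_line ρ hGQ hf hcol hv_qs.symm nce_q nce_s nce_a pne_eq pne_es hea
    have nc_bd : ¬ S.Collinear b d := hnbd
    have nc_be : ¬ S.Collinear b e := hnbe
    have nc_bq : ¬ S.Collinear b q := hnbq
    have nc_de : ¬ S.Collinear d e := hnde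
    have nc_ds : ¬ S.Collinear d s := hnds
    have nc_ep : ¬ S.Collinear e p := nce_p
    have nc_eq' : ¬ S.Collinear e q := nce_q
    have nc_es : ¬ S.Collinear e s := nce_s
    have pne_bd : b ≠ d := hdb.symm
    have pne_be : b ≠ e := heb.symm
    have pne_de : d ≠ e := hed.symm
    obtain ⟨l, lx2, lx3, hl, -, -, hal, -, -, -, -, -, -⟩ := three_lines hGQ a
    obtain ⟨u, v, hu, hv, hau, hav, huv, covl⟩ := exists_two_others hl hal
    have hcau : S.Collinear a u := collinear_mem hl hal hu hau
    have hcav : S.Collinear a v := collinear_mem hl hal hv hav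
    have hgen : ∀ g : P, g ≠ a → ¬ S.Collinear a g →
        (g ∉ l) ∧ (S.Collinear g u ∨ S.Collinear g v) := by
      intro g hga hnag
      have hgl : g ∉ l := fun h => by
        rcases covl g h with h' | h' | h'
        · exact hga h'
        · exact hnag (h'.symm ▸ hcau)
        · exact hnag (h'.symm ▸ hcav)
      refine ⟨hgl, ?_⟩
      obtain ⟨t, htl, hct⟩ := exists_col hGQ hl hgl
      rcases covl t htl with h' | h' | h'
      · exact absurd (h' ▸ hct) fun hcx => hnag hcx.symm'
      · exact Or.inl (h' ▸ hct)
      · exact Or.inr (h' ▸ hct)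
    obtain ⟨nl_b, hbuv⟩ := hgen b hab.symm hnab
    obtain ⟨nl_d, hduv⟩ := hgen d hda hnad
    obtain ⟨nl_e, heuv⟩ := hgen e hea hnae
    obtain ⟨nl_p, hpuv⟩ := hgen p pne_ap.symm hnap
    obtain ⟨nl_q, hquv⟩ := hgen q pne_aq.symm nc_aq
    obtain ⟨nl_s, hsuv⟩ := hgen s pne_as.symm nc_as
    rcases hbuv with c1 | c1 <;> rcases hduv with c2 | c2 <;> rcases heuv with c3 | c3 <;>
      rcases hpuv with c4 | c4 <;> rcases hquv with c5 | c5 <;> rcases hsuv with c6 | c6 <;>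
      first
        | exact four_lines hGQ hl hu nl_b nl_d nl_e pne_bd pne_be pne_de nc_bd nc_be nc_de c1 c2 c3
        | exact four_lines hGQ hl hv nl_b nl_d nl_e pne_bd pne_be pne_de nc_bd nc_be nc_de c1 c2 c3
        | exact four_lines hGQ hl hu nl_b nl_d nl_p pne_bd pne_bp pne_dp nc_bd nc_bp nc_dp c1 c2 c4
        | exact four_lines hGQ hl hv nl_b nl_d nl_p pne_bd pne_bp pne_dp nc_bd nc_bp nc_dp c1 c2 c4
        | exact four_lines hGQ hl hu nl_b nl_d nl_q pne_bd pne_bq pne_dq nc_bd nc_bq nc_dq c1 c2 c5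
        | exact four_lines hGQ hl hv nl_b nl_d nl_q pne_bd pne_bq pne_dq nc_bd nc_bq nc_dq c1 c2 c5
        | exact four_lines hGQ hl hu nl_b nl_d nl_s pne_bd pne_bs pne_ds nc_bd nc_bs nc_ds c1 c2 c6
        | exact four_lines hGQ hl hv nl_b nl_d nl_s pne_bd pne_bs pne_ds nc_bd nc_bs nc_ds c1 c2 c6
        | exact four_lines hGQ hl hu nl_b nl_e nl_p pne_be pne_bp pne_ep nc_be nc_bp nc_ep c1 c3 c4
        | exact four_lines hGQ hl hv nl_b nl_e nl_p pne_be pne_bp pne_ep nc_be nc_bp nc_ep c1 c3 c4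
        | exact four_lines hGQ hl hu nl_b nl_e nl_q pne_be pne_bq pne_eq nc_be nc_bq nc_eq' c1 c3 c5
        | exact four_lines hGQ hl hv nl_b nl_e nl_q pne_be pne_bq pne_eq nc_be nc_bq nc_eq' c1 c3 c5
        | exact four_lines hGQ hl hu nl_b nl_e nl_s pne_be pne_bs pne_es nc_be nc_bs nc_es c1 c3 c6
        | exact four_lines hGQ hl hv nl_b nl_e nl_s pne_be pne_bs pne_es nc_be nc_bs nc_es c1 c3 c6
        | exact four_lines hGQ hl hu nl_b nl_p nl_q pne_bp pne_bq pne_pq nc_bp nc_bq nc_pq c1 c4 c5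
        | exact four_lines hGQ hl hv nl_b nl_p nl_q pne_bp pne_bq pne_pq nc_bp nc_bq nc_pq c1 c4 c5
        | exact four_lines hGQ hl hu nl_b nl_p nl_s pne_bp pne_bs pne_ps nc_bp nc_bs nc_ps c1 c4 c6
        | exact four_lines hGQ hl hv nl_b nl_p nl_s pne_bp pne_bs pne_ps nc_bp nc_bs nc_ps c1 c4 c6
        | exact four_lines hGQ hl hu nl_b nl_q nl_s pne_bq pne_bs pne_qs nc_bq nc_bs nc_qs c1 c5 c6
        | exact four_lines hGQ hl hv nl_b nl_q nl_s pne_bq pne_bs pne_qs nc_bq nc_bs nc_qs c1 c5 c6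
        | exact four_lines hGQ hl hu nl_d nl_e nl_p pne_de pne_dp pne_ep nc_de nc_dp nc_ep c2 c3 c4
        | exact four_lines hGQ hl hv nl_d nl_e nl_p pne_de pne_dp pne_ep nc_de nc_dp nc_ep c2 c3 c4
        | exact four_lines hGQ hl hu nl_d nl_e nl_q pne_de pne_dq pne_eq nc_de nc_dq nc_eq' c2 c3 c5
        | exact four_lines hGQ hl hv nl_d nl_e nl_q pne_de pne_dq pne_eq nc_de nc_dq nc_eq' c2 c3 c5
        | exact four_lines hGQ hl hu nl_d nl_e nl_s pne_de pne_ds pne_es nc_de nc_ds nc_es c2 c3 c6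
        | exact four_lines hGQ hl hv nl_d nl_e nl_s pne_de pne_ds pne_es nc_de nc_ds nc_es c2 c3 c6
        | exact four_lines hGQ hl hu nl_d nl_p nl_q pne_dp pne_dq pne_pq nc_dp nc_dq nc_pq c2 c4 c5
        | exact four_lines hGQ hl hv nl_d nl_p nl_q pne_dp pne_dq pne_pq nc_dp nc_dq nc_pq c2 c4 c5
        | exact four_lines hGQ hl hu nl_d nl_p nl_s pne_dp pne_ds pne_ps nc_dp nc_ds nc_ps c2 c4 c6
        | exact four_lines hGQ hl hv nl_d nl_p nl_s pne_dp pne_ds pne_ps nc_dp nc_ds nc_ps c2 c4 c6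
        | exact four_lines hGQ hl hu nl_d nl_q nl_s pne_dq pne_ds pne_qs nc_dq nc_ds nc_qs c2 c5 c6
        | exact four_lines hGQ hl hv nl_d nl_q nl_s pne_dq pne_ds pne_qs nc_dq nc_ds nc_qs c2 c5 c6
        | exact four_lines hGQ hl hu nl_e nl_p nl_q pne_ep pne_eq pne_pq nc_ep nc_eq' nc_pq c3 c4 c5
        | exact four_lines hGQ hl hv nl_e nl_p nl_q pne_ep pne_eq pne_pq nc_ep nc_eq' nc_pq c3 c4 c5
        | exact four_lines hGQ hl hu nl_e nl_p nl_s pne_ep pne_es pne_ps nc_ep nc_es nc_ps c3 c4 c6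
        | exact four_lines hGQ hl hv nl_e nl_p nl_s pne_ep pne_es pne_ps nc_ep nc_es nc_ps c3 c4 c6
        | exact four_lines hGQ hl hu nl_e nl_q nl_s pne_eq pne_es pne_qs nc_eq' nc_es nc_qs c3 c5 c6
        | exact four_lines hGQ hl hv nl_e nl_q nl_s pne_eq pne_es pne_qs nc_eq' nc_es nc_qs c3 c5 c6
        | exact four_lines hGQ hl hu nl_p nl_q nl_s pne_pq pne_ps pne_qs nc_pq nc_ps nc_qs c4 c5 c6
        | exact four_lines hGQ hl hv nl_p nl_q nl_s pne_pq pne_ps pne_qs nc_pq nc_ps nc_qs c4 c5 c6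
  rcases hcov d hda hdb hnad hnbd hdc with h | h | h
  · exact work y2 hna2 hnb2 (h.symm ▸ n12) h2a h2b (fun hh => h12 (h.symm.trans hh.symm))
  · exact work y1 hna1 hnb1 (h.symm ▸ ncol_symm n12) h1a h1b (fun hh => h12 (hh.trans h))
  · exact work y1 hna1 hnb1 (h.symm ▸ ncol_symm n13) h1a h1b (fun hh => h13 (hh.trans h))

end Main2

/-- For a faithful representation of the `(2,2)`-GQ, `|R| = 2^4`
iff `r_a r_b r_c = 1` for every complete 3-arc `{a,b,c}` of `S`. -/
theorem gq22_card_iff_triad_rel {P : Type*} (S : SlimPLS P)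
    (hGQ : S.IsGQ 2) {R : Type*} [Group R] (ρ : S.Rep R)
    (hf : Function.Injective ρ.r) :
    Nat.card R = 2 ^ 4 ↔
      ∀ a b c : P, S.Complete3Arc a b c → ρ.r a * ρ.r b * ρ.r c = 1 :=
  ⟨fun h => rel_of_card hGQ ρ hf h, fun h => card_of_rel hGQ ρ hf h⟩
end

section
/- Let S = (P, L) be a generalized quadrangle of order (2,2) and let (R, ψ) be a faithful representation of S with |R| = 2^4. If a, b, c are three distinct points of P with r_a r_b r_c = 1, then {a,b,c} is a line of S or a complete 3-arc of S. -/
open scoped Classical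

section Aux

variable {P : Type*} {R : Type*} [Group R]

lemma SlimPLS.Collinear.symm'_s7 {S : SlimPLS P} {x y : P} (h : S.Collinear x y) :
    S.Collinear y x :=
  ⟨Ne.symm h.1, h.2.elim fun l hl => ⟨l, hl.1, hl.2.2, hl.2.1⟩⟩

lemma col_of_mem (S : SlimPLS P) {l : Finset P} {x y : P} (hl : l ∈ S.lines)
    (hx : x ∈ l) (hy : y ∈ l) (hxy : x ≠ y) : S.Collinear x y :=
  ⟨hxy, l, hl, hx, hy⟩

lemma rep_sq (S : SlimPLS P) (ρ : S.Rep R) (x : P) : ρ.r x * ρ.r x = 1 := by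
  have := pow_orderOf_eq_one (ρ.r x)
  rwa [ρ.order_two x, pow_two] at this

lemma rep_ne_one (S : SlimPLS P) (ρ : S.Rep R) (x : P) : ρ.r x ≠ 1 := by
  intro h
  have := ρ.order_two x
  rw [h, orderOf_one] at this
  omega

lemma not_mem3 {u v w x : P} (h1 : x ≠ u) (h2 : x ≠ v) (h3 : x ≠ w) :
    x ∉ ({u, v, w} : Finset P) := by simp [h1, h2, h3]

lemma line_eq_of_mem (S : SlimPLS P) {l : Finset P} {x : P} (hl : l ∈ S.lines)
    (hx : x ∈ l) : ∃ u v, u ≠ x ∧ v ≠ x ∧ u ≠ v ∧ l = {x, u, v} := by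
  classical
  obtain ⟨p, q, s, hpq, hps, hqs, rfl⟩ := Finset.card_eq_three.mp (S.three_points l hl)
  simp only [Finset.mem_insert, Finset.mem_singleton] at hx
  rcases hx with rfl | rfl | rfl
  · exact ⟨q, s, hpq.symm, hps.symm, hqs, rfl⟩
  · exact ⟨p, s, hpq, hqs.symm, hps, by ext t; simp; try tauto⟩
  · exact ⟨p, q, hps, hqs, hpq, by ext t; simp; try tauto⟩

lemma line_eq_of_two_mem (S : SlimPLS P) {l : Finset P} {x y : P} (hl : l ∈ S.lines)
    (hx : x ∈ l) (hy : y ∈ l) (hxy : x ≠ y) : ∃ z, z ≠ x ∧ z ≠ y ∧ l = {x, y, z} := by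
  classical
  obtain ⟨p, q, s, hpq, hps, hqs, rfl⟩ := Finset.card_eq_three.mp (S.three_points l hl)
  simp only [Finset.mem_insert, Finset.mem_singleton] at hx hy
  rcases hx with rfl | rfl | rfl <;> rcases hy with rfl | rfl | rfl
  · exact absurd rfl hxy
  · exact ⟨s, hps.symm, hqs.symm, by ext t; simp; try tauto⟩
  · exact ⟨q, hpq.symm, hqs, by ext t; simp; try tauto⟩
  · exact ⟨s, hqs.symm, hps.symm, by ext t; simp; try tauto⟩
  · exact absurd rfl hxy
  · exact ⟨p, hpq, hps, by ext t; simp; try tauto⟩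
  · exact ⟨q, hqs, hpq.symm, by ext t; simp; try tauto⟩
  · exact ⟨p, hps, hpq, by ext t; simp; try tauto⟩
  · exact absurd rfl hxy

lemma star_exists (S : SlimPLS P) (ρ : S.Rep R) {x y : P} (h : S.Collinear x y) :
    ∃ z, z ≠ x ∧ z ≠ y ∧ ({x, y, z} : Finset P) ∈ S.lines ∧ ρ.r x * ρ.r y = ρ.r z := by
  obtain ⟨hxy, l, hl, hx, hy⟩ := h
  obtain ⟨z, hzx, hzy, rfl⟩ := line_eq_of_two_mem S hl hx hy hxy
  exact ⟨z, hzx, hzy, hl, ρ.line_rel _ hl x (by simp) y (by simp) z (by simp)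
    hxy hzx.symm.symm.symm hzy.symm.symm.symm⟩

lemma gq_unique (S : SlimPLS P) (hGQ : S.IsGQ 2) {l : Finset P} (hl : l ∈ S.lines)
    {x y z : P} (hxl : x ∉ l) (hy : y ∈ l) (hz : z ∈ l)
    (h1 : S.Collinear x y) (h2 : S.Collinear x z) : y = z := by
  obtain ⟨w, -, hu⟩ := hGQ.2.2.2 x l hl hxl
  rw [hu y ⟨hy, h1⟩, hu z ⟨hz, h2⟩]

lemma gq3_exists (S : SlimPLS P) (hGQ : S.IsGQ 2) {u v w x : P}
    (hl : ({u, v, w} : Finset P) ∈ S.lines)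
    (h1 : x ≠ u) (h2 : x ≠ v) (h3 : x ≠ w)
    (hu : ¬ S.Collinear x u) (hv : ¬ S.Collinear x v) : S.Collinear x w := by
  obtain ⟨y, ⟨hyl, hxy⟩, -⟩ := hGQ.2.2.2 x _ hl (not_mem3 h1 h2 h3)
  simp only [Finset.mem_insert, Finset.mem_singleton] at hyl
  rcases hyl with rfl | rfl | rfl
  · exact absurd hxy hu
  · exact absurd hxy hv
  · exact hxy

lemma lines_thru (S : SlimPLS P) (hGQ : S.IsGQ 2) (x : P) :
    ∃ l1 l2 l3 : Finset P, l1 ∈ S.lines ∧ l2 ∈ S.lines ∧ l3 ∈ S.lines ∧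
      x ∈ l1 ∧ x ∈ l2 ∧ x ∈ l3 ∧ l1 ≠ l2 ∧ l1 ≠ l3 ∧ l2 ≠ l3 ∧
      ∀ l ∈ S.lines, x ∈ l → l = l1 ∨ l = l2 ∨ l = l3 := by
  have h := hGQ.2.2.1 x
  norm_num at h
  rw [Set.ncard_eq_three] at h
  obtain ⟨l1, l2, l3, h12, h13, h23, hset⟩ := h
  have hmem : ∀ l : Finset P, (l ∈ S.lines ∧ x ∈ l) ↔ (l = l1 ∨ l = l2 ∨ l = l3) := by
    intro l
    constructor
    · intro hl
      have : l ∈ {l | l ∈ S.lines ∧ x ∈ l} := hl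
      rw [hset] at this
      simpa using this
    · intro hl
      have : l ∈ ({l1, l2, l3} : Set (Finset P)) := by simpa using hl
      rw [← hset] at this
      exact this
  exact ⟨l1, l2, l3, ((hmem l1).mpr (by tauto)).1, ((hmem l2).mpr (by tauto)).1,
    ((hmem l3).mpr (by tauto)).1, ((hmem l1).mpr (by tauto)).2, ((hmem l2).mpr (by tauto)).2,
    ((hmem l3).mpr (by tauto)).2, h12, h13, h23, fun l hl hxl => (hmem l).mp ⟨hl, hxl⟩⟩

end Aux

section Count

variable {P : Type*}

lemma nbr_card (S : SlimPLS P) (hGQ : S.IsGQ 2) [Fintype P] (x : P) :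
    (Finset.univ.filter (fun y => S.Collinear x y)).card = 6 := by
  classical
  obtain ⟨l1, l2, l3, hl1, hl2, hl3, hx1, hx2, hx3, h12, h13, h23, henum⟩ := lines_thru S hGQ x
  have key : Finset.univ.filter (fun y => S.Collinear x y)
      = (l1.erase x ∪ l2.erase x) ∪ l3.erase x := by
    ext z
    simp only [Finset.mem_filter, Finset.mem_univ, true_and, Finset.mem_union, Finset.mem_erase]
    constructor
    · rintro ⟨hzx, l, hl, hxl, hzl⟩
      rcases henum l hl hxl with rfl | rfl | rfl
      · exact Or.inl (Or.inl ⟨Ne.symm hzx, hzl⟩)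
      · exact Or.inl (Or.inr ⟨Ne.symm hzx, hzl⟩)
      · exact Or.inr ⟨Ne.symm hzx, hzl⟩
    · rintro ((⟨hzx, hz⟩ | ⟨hzx, hz⟩) | ⟨hzx, hz⟩)
      · exact col_of_mem S hl1 hx1 hz (Ne.symm hzx)
      · exact col_of_mem S hl2 hx2 hz (Ne.symm hzx)
      · exact col_of_mem S hl3 hx3 hz (Ne.symm hzx)
  have hd12 : Disjoint (l1.erase x) (l2.erase x) := by
    rw [Finset.disjoint_left]
    intro z hz1 hz2
    rw [Finset.mem_erase] at hz1 hz2
    exact h12 (S.unique_line l1 hl1 l2 hl2 x z (Ne.symm hz1.1) hx1 hz1.2 hx2 hz2.2)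
  have hd13 : Disjoint (l1.erase x) (l3.erase x) := by
    rw [Finset.disjoint_left]
    intro z hz1 hz2
    rw [Finset.mem_erase] at hz1 hz2
    exact h13 (S.unique_line l1 hl1 l3 hl3 x z (Ne.symm hz1.1) hx1 hz1.2 hx3 hz2.2)
  have hd23 : Disjoint (l2.erase x) (l3.erase x) := by
    rw [Finset.disjoint_left]
    intro z hz1 hz2
    rw [Finset.mem_erase] at hz1 hz2
    exact h23 (S.unique_line l2 hl2 l3 hl3 x z (Ne.symm hz1.1) hx2 hz1.2 hx3 hz2.2)
  have hcard : ∀ l ∈ S.lines, x ∈ l → (l.erase x).card = 2 := by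
    intro l hl hxl
    rw [Finset.card_erase_of_mem hxl, S.three_points l hl]
  have hd : Disjoint (l1.erase x ∪ l2.erase x) (l3.erase x) :=
    Finset.disjoint_union_left.mpr ⟨hd13, hd23⟩
  rw [key, Finset.card_union_of_disjoint hd, Finset.card_union_of_disjoint hd12,
    hcard l1 hl1 hx1, hcard l2 hl2 hx2, hcard l3 hl3 hx3]

lemma common_card (S : SlimPLS P) (hGQ : S.IsGQ 2) [Fintype P] {x y : P}
    (hxy : x ≠ y) (hncol : ¬ S.Collinear x y) :
    (Finset.univ.filter (fun z => S.Collinear x z ∧ S.Collinear y z)).card = 3 := by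
  classical
  obtain ⟨l1, l2, l3, hl1, hl2, hl3, hx1, hx2, hx3, h12, h13, h23, henum⟩ := lines_thru S hGQ x
  have hynot : ∀ l ∈ S.lines, x ∈ l → y ∉ l := by
    intro l hl hxl hyl
    exact hncol (col_of_mem S hl hxl hyl hxy)
  obtain ⟨w1, ⟨hw1l, hw1c⟩, hu1⟩ := hGQ.2.2.2 y l1 hl1 (hynot l1 hl1 hx1)
  obtain ⟨w2, ⟨hw2l, hw2c⟩, hu2⟩ := hGQ.2.2.2 y l2 hl2 (hynot l2 hl2 hx2)
  obtain ⟨w3, ⟨hw3l, hw3c⟩, hu3⟩ := hGQ.2.2.2 y l3 hl3 (hynot l3 hl3 hx3)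
  have hwx : ∀ w : P, S.Collinear y w → x ≠ w := by
    rintro w hc rfl
    exact hncol hc.symm'_s7
  have key : Finset.univ.filter (fun z => S.Collinear x z ∧ S.Collinear y z) = {w1, w2, w3} := by
    ext z
    simp only [Finset.mem_filter, Finset.mem_univ, true_and, Finset.mem_insert,
      Finset.mem_singleton]
    constructor
    · rintro ⟨⟨hzx, l, hl, hxl, hzl⟩, hyz⟩
      rcases henum l hl hxl with rfl | rfl | rfl
      · exact Or.inl (hu1 z ⟨hzl, hyz⟩)
      · exact Or.inr (Or.inl (hu2 z ⟨hzl, hyz⟩))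
      · exact Or.inr (Or.inr (hu3 z ⟨hzl, hyz⟩))
    · rintro (rfl | rfl | rfl)
      · exact ⟨col_of_mem S hl1 hx1 hw1l (hwx _ hw1c), hw1c⟩
      · exact ⟨col_of_mem S hl2 hx2 hw2l (hwx _ hw2c), hw2c⟩
      · exact ⟨col_of_mem S hl3 hx3 hw3l (hwx _ hw3c), hw3c⟩
  rw [key]
  have d12 : w1 ≠ w2 := by
    rintro rfl
    exact h12 (S.unique_line l1 hl1 l2 hl2 x w1 (hwx _ hw1c) hx1 hw1l hx2 hw2l)
  have d13 : w1 ≠ w3 := by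
    rintro rfl
    exact h13 (S.unique_line l1 hl1 l3 hl3 x w1 (hwx _ hw1c) hx1 hw1l hx3 hw3l)
  have d23 : w2 ≠ w3 := by
    rintro rfl
    exact h23 (S.unique_line l2 hl2 l3 hl3 x w2 (hwx _ hw2c) hx2 hw2l hx3 hw3l)
  rw [Finset.card_insert_of_notMem (by simp [d12, d13]),
    Finset.card_insert_of_notMem (by simp [d23]), Finset.card_singleton]

lemma far_nbr_card (S : SlimPLS P) (hGQ : S.IsGQ 2) [Fintype P] {x u : P}
    (hxu : S.Collinear x u) :
    (Finset.univ.filter (fun y => (y ≠ x ∧ ¬ S.Collinear x y) ∧ S.Collinear u y)).card = 4 := by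
  classical
  obtain ⟨hne, l, hl, hxl, hul⟩ := hxu
  have hxu : S.Collinear x u := ⟨hne, l, hl, hxl, hul⟩
  obtain ⟨s, hsx, hsu, rfl⟩ := line_eq_of_two_mem S hl hxl hul hne
  have hsub : ({x, s} : Finset P) ⊆ Finset.univ.filter (fun y => S.Collinear u y) := by
    intro z hz
    simp only [Finset.mem_insert, Finset.mem_singleton] at hz
    simp only [Finset.mem_filter, Finset.mem_univ, true_and]
    rcases hz with rfl | rfl
    · exact hxu.symm'_s7
    · exact col_of_mem S hl (by simp) (by simp) (Ne.symm hsu)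
  have key : Finset.univ.filter (fun y => (y ≠ x ∧ ¬ S.Collinear x y) ∧ S.Collinear u y)
      = (Finset.univ.filter (fun y => S.Collinear u y)) \ {x, s} := by
    ext y
    simp only [Finset.mem_filter, Finset.mem_univ, true_and, Finset.mem_sdiff,
      Finset.mem_insert, Finset.mem_singleton]
    constructor
    · rintro ⟨⟨hyx, hnxy⟩, huy⟩
      refine ⟨huy, ?_⟩
      push_neg
      refine ⟨hyx, ?_⟩
      rintro rfl
      exact hnxy (col_of_mem S hl (by simp) (by simp) (Ne.symm hsx))
    · rintro ⟨huy, hys⟩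
      push_neg at hys
      refine ⟨⟨hys.1, ?_⟩, huy⟩
      intro hxy
      obtain ⟨huy', m, hm, hum, hym⟩ := huy
      by_cases hxm : x ∈ m
      · have hml : m = {x, u, s} := S.unique_line m hm _ hl x u hne hxm hum hxl hul
        rw [hml] at hym
        simp only [Finset.mem_insert, Finset.mem_singleton] at hym
        rcases hym with rfl | rfl | rfl
        · exact hys.1 rfl
        · exact huy' rfl
        · exact hys.2 rfl
      · exact huy' (gq_unique S hGQ hm hxm hum hym hxu hxy)
  have hpair : ({x, s} : Finset P).card = 2 := by
    rw [Finset.card_insert_of_notMem (by simp [Ne.symm hsx] : x ∉ ({s} : Finset P)),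
      Finset.card_singleton]
  rw [key, Finset.card_sdiff_of_subset hsub, nbr_card S hGQ u, hpair]

lemma card_points (S : SlimPLS P) (hGQ : S.IsGQ 2) [Fintype P] : Fintype.card P = 15 := by
  classical
  obtain ⟨x⟩ := S.nonempty_pts
  set Nx := Finset.univ.filter (fun y => S.Collinear x y) with hNx
  set Fx := Finset.univ.filter (fun y => y ≠ x ∧ ¬ S.Collinear x y) with hFx
  have hswap : ∑ y ∈ Fx, (Nx.filter (fun u => S.Collinear y u)).card
      = ∑ u ∈ Nx, (Fx.filter (fun y => S.Collinear y u)).card := by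
    simp only [Finset.card_filter]
    exact Finset.sum_comm
  have hrow : ∀ y ∈ Fx, (Nx.filter (fun u => S.Collinear y u)).card = 3 := by
    intro y hy
    simp only [hFx, Finset.mem_filter, Finset.mem_univ, true_and] at hy
    have heq : Nx.filter (fun u => S.Collinear y u)
        = Finset.univ.filter (fun z => S.Collinear x z ∧ S.Collinear y z) := by
      rw [hNx, Finset.filter_filter]
    rw [heq]
    exact common_card S hGQ (Ne.symm hy.1) hy.2
  have hcol : ∀ u ∈ Nx, (Fx.filter (fun y => S.Collinear y u)).card = 4 := by
    intro u hu
    simp only [hNx, Finset.mem_filter, Finset.mem_univ, true_and] at hu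
    have heq : Fx.filter (fun y => S.Collinear y u)
        = Finset.univ.filter (fun y => (y ≠ x ∧ ¬ S.Collinear x y) ∧ S.Collinear u y) := by
      rw [hFx, Finset.filter_filter]
      ext z
      simp only [Finset.mem_filter, Finset.mem_univ, true_and]
      constructor
      · rintro ⟨⟨h1, h2⟩, h3⟩
        exact ⟨⟨h1, h2⟩, h3.symm'_s7⟩
      · rintro ⟨⟨h1, h2⟩, h3⟩
        exact ⟨⟨h1, h2⟩, h3.symm'_s7⟩
    rw [heq]
    exact far_nbr_card S hGQ hu
  have e1 : ∑ y ∈ Fx, (Nx.filter (fun u => S.Collinear y u)).card = 3 * Fx.card := by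
    rw [Finset.sum_congr rfl hrow, Finset.sum_const, smul_eq_mul, mul_comm]
  have e2 : ∑ u ∈ Nx, (Fx.filter (fun y => S.Collinear y u)).card = 4 * Nx.card := by
    rw [Finset.sum_congr rfl hcol, Finset.sum_const, smul_eq_mul, mul_comm]
  have hN6 : Nx.card = 6 := nbr_card S hGQ x
  have hF8 : Fx.card = 8 := by
    rw [e1, e2, hN6] at hswap
    omega
  have huniv : (Finset.univ : Finset P) = ({x} ∪ Nx) ∪ Fx := by
    ext y
    simp only [Finset.mem_univ, true_iff, Finset.mem_union, Finset.mem_singleton, hNx, hFx,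
      Finset.mem_filter, Finset.mem_univ, true_and]
    by_cases h1 : y = x
    · tauto
    · by_cases h2 : S.Collinear x y <;> tauto
  have d1 : Disjoint ({x} : Finset P) Nx := by
    rw [Finset.disjoint_left]
    rintro z hz
    simp only [Finset.mem_singleton] at hz
    subst hz
    simp only [hNx, Finset.mem_filter, Finset.mem_univ, true_and]
    intro hc
    exact hc.1 rfl
  have d2 : Disjoint ({x} ∪ Nx) Fx := by
    rw [Finset.disjoint_left]
    rintro z hz
    simp only [Finset.mem_union, Finset.mem_singleton, hNx, Finset.mem_filter,
      Finset.mem_univ, true_and] at hz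
    simp only [hFx, Finset.mem_filter, Finset.mem_univ, true_and]
    rcases hz with rfl | hz
    · intro hcon
      exact hcon.1 rfl
    · intro hcon
      exact hcon.2 hz
  rw [← Finset.card_univ, huniv, Finset.card_union_of_disjoint d2,
    Finset.card_union_of_disjoint d1, Finset.card_singleton, hN6, hF8]

end Count

section Core

variable {P : Type*} {R : Type*} [Group R]

lemma rep_surj (S : SlimPLS P) (hGQ : S.IsGQ 2) (ρ : S.Rep R)
    (hf : Function.Injective ρ.r) (hcard : Nat.card R = 2 ^ 4) :
    ∀ g : R, g ≠ 1 → ∃ x, ρ.r x = g := by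
  have hRfin : Finite R := Nat.finite_of_card_ne_zero (by rw [hcard]; norm_num)
  have hPfin : Finite P := Finite.of_injective ρ.r hf
  letI := Fintype.ofFinite P
  have hP : Nat.card P = 15 := by rw [Nat.card_eq_fintype_card, card_points S hGQ]
  have h1 : (Set.range ρ.r).ncard = 15 := by
    rw [← Set.image_univ, Set.ncard_image_of_injective _ hf, Set.ncard_univ, hP]
  have h2 : ({1}ᶜ : Set R).ncard = 15 := by
    have h3 := Set.ncard_add_ncard_compl ({1} : Set R) (Set.toFinite _) (Set.toFinite _)
    rw [Set.ncard_singleton, hcard] at h3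
    omega
  have hsub : Set.range ρ.r ⊆ ({1}ᶜ : Set R) := by
    rintro g ⟨x, rfl⟩
    simpa using rep_ne_one S ρ x
  have heq := Set.eq_of_subset_of_ncard_le hsub (by rw [h1, h2]) (Set.toFinite _)
  intro g hg
  have hmem : g ∈ Set.range ρ.r := by
    rw [heq]
    exact Set.mem_compl_singleton_iff.mpr hg
  exact hmem

lemma core_contra (S : SlimPLS P) (hGQ : S.IsGQ 2) (ρ : S.Rep R)
    (hf : Function.Injective ρ.r)
    (hsq : ∀ g : R, g * g = 1) (hcomm : ∀ g h : R, g * h = h * g)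
    {a b c d w : P}
    (hab : ¬ S.Collinear a b) (hac : ¬ S.Collinear a c) (hbc : ¬ S.Collinear b c)
    (hda : ¬ S.Collinear d a) (hdb : ¬ S.Collinear d b) (hdc : ¬ S.Collinear d c)
    (nab : a ≠ b) (nac : a ≠ c) (nbc : b ≠ c)
    (nda : d ≠ a) (ndb : d ≠ b) (ndc : d ≠ c)
    (hc : ρ.r a * ρ.r b = ρ.r c)
    (hwa : S.Collinear w a) (hwb : S.Collinear w b) (hwd : S.Collinear w d) : False := by
  classical
  have hsq' : ∀ g h : R, g * (g * h) = h := fun g h => by rw [← mul_assoc, hsq, one_mul]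
  have hleft : ∀ g h k : R, g * (h * k) = h * (g * k) := fun g h k => by
    rw [← mul_assoc, hcomm g h, mul_assoc]
  obtain ⟨wd, hwd1, hwd2, hlwd, hrwd⟩ := star_exists S ρ hwd
  obtain ⟨wa, hwa1, hwa2, hlwa, hrwa⟩ := star_exists S ρ hwa
  obtain ⟨wb, hwb1, hwb2, hlwb, hrwb⟩ := star_exists S ρ hwb
  have naw : a ≠ w := Ne.symm hwa.1
  have nbw : b ≠ w := Ne.symm hwb.1
  have ndw : d ≠ w := Ne.symm hwd.1
  have ncw : c ≠ w := by rintro rfl; exact hdc hwd.symm'_s7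
  have nawd : a ≠ wd := by rintro rfl; exact hda (col_of_mem S hlwd (by simp) (by simp) nda)
  have nbwd : b ≠ wd := by rintro rfl; exact hdb (col_of_mem S hlwd (by simp) (by simp) ndb)
  have ncwd : c ≠ wd := by rintro rfl; exact hdc (col_of_mem S hlwd (by simp) (by simp) ndc)
  have ndwa : d ≠ wa := by rintro rfl; exact hda (col_of_mem S hlwa (by simp) (by simp) nda)
  have ndwb : d ≠ wb := by rintro rfl; exact hdb (col_of_mem S hlwb (by simp) (by simp) ndb)
  have ncwa : c ≠ wa := by rintro rfl; exact hac (col_of_mem S hlwa (by simp) (by simp) nac)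
  have ncwb : c ≠ wb := by rintro rfl; exact hbc (col_of_mem S hlwb (by simp) (by simp) nbc)
  -- Step 1 : w is not collinear with c
  have hwc : ¬ S.Collinear w c := by
    intro hwc
    obtain ⟨wc, hwc1, hwc2, hlwc, -⟩ := star_exists S ρ hwc
    obtain ⟨l1, l2, l3, hl1, hl2, hl3, hm1, hm2, hm3, h12, h13, h23, henum⟩ := lines_thru S hGQ w
    have mdl := henum _ hlwd (by simp)
    have mal := henum _ hlwa (by simp)
    have mbl := henum _ hlwb (by simp)
    have mcl := henum _ hlwc (by simp)
    have eda : ({w, d, wd} : Finset P) ≠ {w, a, wa} := by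
      intro hEq
      have hmem : d ∈ ({w, a, wa} : Finset P) := by rw [← hEq]; simp
      exact hda (col_of_mem S hlwa hmem (by simp) nda)
    have edb : ({w, d, wd} : Finset P) ≠ {w, b, wb} := by
      intro hEq
      have hmem : d ∈ ({w, b, wb} : Finset P) := by rw [← hEq]; simp
      exact hdb (col_of_mem S hlwb hmem (by simp) ndb)
    have edc : ({w, d, wd} : Finset P) ≠ {w, c, wc} := by
      intro hEq
      have hmem : d ∈ ({w, c, wc} : Finset P) := by rw [← hEq]; simp
      exact hdc (col_of_mem S hlwc hmem (by simp) ndc)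
    have eab : ({w, a, wa} : Finset P) ≠ {w, b, wb} := by
      intro hEq
      have hmem : a ∈ ({w, b, wb} : Finset P) := by rw [← hEq]; simp
      exact hab (col_of_mem S hlwb hmem (by simp) nab)
    have eac : ({w, a, wa} : Finset P) ≠ {w, c, wc} := by
      intro hEq
      have hmem : a ∈ ({w, c, wc} : Finset P) := by rw [← hEq]; simp
      exact hac (col_of_mem S hlwc hmem (by simp) nac)
    have ebc : ({w, b, wb} : Finset P) ≠ {w, c, wc} := by
      intro hEq
      have hmem : b ∈ ({w, c, wc} : Finset P) := by rw [← hEq]; simp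
      exact hbc (col_of_mem S hlwc hmem (by simp) nbc)
    have hsub : ({({w, d, wd} : Finset P), {w, a, wa}, {w, b, wb}, {w, c, wc}} :
        Finset (Finset P)) ⊆ {l1, l2, l3} := by
      intro l hl
      simp only [Finset.mem_insert, Finset.mem_singleton] at hl ⊢
      rcases hl with rfl | rfl | rfl | rfl
      · exact mdl
      · exact mal
      · exact mbl
      · exact mcl
    have hc4 : ({({w, d, wd} : Finset P), {w, a, wa}, {w, b, wb}, {w, c, wc}} :
        Finset (Finset P)).card = 4 := by
      rw [Finset.card_insert_of_notMem (by simp [eda, edb, edc]),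
        Finset.card_insert_of_notMem (by simp [eab, eac]),
        Finset.card_insert_of_notMem (by simp [ebc]), Finset.card_singleton]
    have hle := Finset.card_le_card hsub
    rw [hc4] at hle
    have t1 := Finset.card_insert_le l1 ({l2, l3} : Finset (Finset P))
    have t2 := Finset.card_insert_le l2 ({l3} : Finset (Finset P))
    have t3 : ({l3} : Finset (Finset P)).card = 1 := Finset.card_singleton _
    omega
  -- Step 2
  have hncw : ¬ S.Collinear c w := fun hh => hwc hh.symm'_s7
  have hnca : ¬ S.Collinear c a := fun hh => hac hh.symm'_s7
  have hncb : ¬ S.Collinear c b := fun hh => hbc hh.symm'_s7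
  have hncd : ¬ S.Collinear c d := fun hh => hdc hh.symm'_s7
  have hcwa : S.Collinear c wa := gq3_exists S hGQ hlwa ncw (Ne.symm nac) ncwa hncw hnca
  have hcwb : S.Collinear c wb := gq3_exists S hGQ hlwb ncw (Ne.symm nbc) ncwb hncw hncb
  have hcwd : S.Collinear c wd := gq3_exists S hGQ hlwd ncw (Ne.symm ndc) ncwd hncw hncd
  -- Step 3
  obtain ⟨s, hs1, hs2, hlN, hrs⟩ := star_exists S ρ hcwd
  -- Step 4
  have hawd : ¬ S.Collinear a wd := by
    intro hh
    exact hwd1 (gq_unique S hGQ hlwd (not_mem3 naw (Ne.symm nda) nawd)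
      (by simp) (by simp) hwa.symm'_s7 hh).symm
  have hbwd : ¬ S.Collinear b wd := by
    intro hh
    exact hwd1 (gq_unique S hGQ hlwd (not_mem3 nbw (Ne.symm ndb) nbwd)
      (by simp) (by simp) hwb.symm'_s7 hh).symm
  have nas : a ≠ s := by rintro rfl; exact hac (col_of_mem S hlN (by simp) (by simp) nac)
  have nbs : b ≠ s := by rintro rfl; exact hbc (col_of_mem S hlN (by simp) (by simp) nbc)
  have nds : d ≠ s := by rintro rfl; exact hdc (col_of_mem S hlN (by simp) (by simp) ndc)
  have has : S.Collinear a s := gq3_exists S hGQ hlN nac nawd nas hac hawd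
  have hbs : S.Collinear b s := gq3_exists S hGQ hlN nbc nbwd nbs hbc hbwd
  -- Step 5
  have hdwd : S.Collinear d wd := col_of_mem S hlwd (by simp) (by simp) (Ne.symm hwd2)
  have hds : ¬ S.Collinear d s := by
    intro hh
    exact hs2 (gq_unique S hGQ hlN (not_mem3 ndc (Ne.symm hwd2) nds)
      (by simp) (by simp) hdwd hh).symm
  -- Step 6
  obtain ⟨sa, hsa1, hsa2, hlA, hrsa⟩ := star_exists S ρ has
  obtain ⟨sb, hsb1, hsb2, hlB2, hrsb⟩ := star_exists S ρ hbs
  have ndsa : d ≠ sa := by rintro rfl; exact hda (col_of_mem S hlA (by simp) (by simp) nda)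
  have ndsb : d ≠ sb := by rintro rfl; exact hdb (col_of_mem S hlB2 (by simp) (by simp) ndb)
  have hdsa : S.Collinear d sa := gq3_exists S hGQ hlA nda nds ndsa hda hds
  have hdsb : S.Collinear d sb := gq3_exists S hGQ hlB2 ndb nds ndsb hdb hds
  -- Step 7
  obtain ⟨t1, ht11, ht12, hlT1, hrt1⟩ := star_exists S ρ hdsa
  obtain ⟨t2, ht21, ht22, hlT2, hrt2⟩ := star_exists S ρ hdsb
  have ht1wb : t1 = wb := by
    apply hf
    rw [← hrt1, ← hrwb, ← hrsa, ← hrs, ← hrwd, ← hc]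
    simp only [mul_assoc]
    rw [hsq' (ρ.r a), hleft (ρ.r d) (ρ.r b), hleft (ρ.r d) (ρ.r w), hsq, mul_one, hcomm]
  have ht2wa : t2 = wa := by
    apply hf
    rw [← hrt2, ← hrwa, ← hrsb, ← hrs, ← hrwd, ← hc]
    simp only [mul_assoc]
    rw [hleft (ρ.r b) (ρ.r a), hsq' (ρ.r b), hleft (ρ.r d) (ρ.r a), hleft (ρ.r d) (ρ.r w),
      hsq, mul_one, hcomm]
  have hdwb : S.Collinear d wb := by
    have hcol := col_of_mem S hlT1 (by simp) (by simp : t1 ∈ _) (Ne.symm ht11)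
    rwa [ht1wb] at hcol
  have hdwa : S.Collinear d wa := by
    have hcol := col_of_mem S hlT2 (by simp) (by simp : t2 ∈ _) (Ne.symm ht21)
    rwa [ht2wa] at hcol
  -- Step 8
  obtain ⟨e, he1, he2, hlE, hre⟩ := star_exists S ρ hcwa
  have hewb : e = wb := by
    apply hf
    rw [← hre, ← hrwa, ← hrwb, ← hc]
    simp only [mul_assoc]
    rw [hleft (ρ.r b) (ρ.r w), hleft (ρ.r a) (ρ.r w), hleft (ρ.r a) (ρ.r b), hsq, mul_one]
  rw [hewb] at hlE
  have hweq : wa = wb := gq_unique S hGQ hlE (not_mem3 ndc ndwa ndwb)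
    (by simp) (by simp) hdwa hdwb
  have haeq : a = b := by
    apply hf
    have h' : ρ.r w * ρ.r a = ρ.r w * ρ.r b := by rw [hrwa, hrwb, hweq]
    exact mul_left_cancel h'
  exact nab haeq

end Core

section Final

variable {P : Type*} {R : Type*} [Group R]

lemma no_4arc (S : SlimPLS P) (hGQ : S.IsGQ 2) (ρ : S.Rep R)
    (hf : Function.Injective ρ.r)
    (hsq : ∀ g : R, g * g = 1) (hcomm : ∀ g h : R, g * h = h * g)
    {a b c d : P}
    (hab : ¬ S.Collinear a b) (hac : ¬ S.Collinear a c) (hbc : ¬ S.Collinear b c)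
    (hda : ¬ S.Collinear d a) (hdb : ¬ S.Collinear d b) (hdc : ¬ S.Collinear d c)
    (nab : a ≠ b) (nac : a ≠ c) (nbc : b ≠ c)
    (nda : d ≠ a) (ndb : d ≠ b) (ndc : d ≠ c)
    (hc : ρ.r a * ρ.r b = ρ.r c) : False := by
  classical
  have hsq' : ∀ g h : R, g * (g * h) = h := fun g h => by rw [← mul_assoc, hsq, one_mul]
  obtain ⟨l1, l2, l3, hl1, hl2, hl3, hd1, hd2, hd3, h12, h13, h23, henum⟩ := lines_thru S hGQ d
  obtain ⟨u, v, hu1, hv1, huv, rfl⟩ := line_eq_of_mem S hl1 hd1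
  have hdu : S.Collinear d u := col_of_mem S hl1 (by simp) (by simp) (Ne.symm hu1)
  have hdv : S.Collinear d v := col_of_mem S hl1 (by simp) (by simp) (Ne.symm hv1)
  have key : ∀ z : P, z ≠ d → ¬ S.Collinear d z → (S.Collinear z u ∨ S.Collinear z v) := by
    intro z hzd hzcol
    have hznl : z ∉ ({d, u, v} : Finset P) := by
      refine not_mem3 hzd ?_ ?_
      · rintro rfl; exact hzcol hdu
      · rintro rfl; exact hzcol hdv
    obtain ⟨y, ⟨hyl, hzy⟩, -⟩ := hGQ.2.2.2 z _ hl1 hznl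
    simp only [Finset.mem_insert, Finset.mem_singleton] at hyl
    rcases hyl with rfl | rfl | rfl
    · exact absurd hzy.symm'_s7 hzcol
    · exact Or.inl hzy
    · exact Or.inr hzy
  have ha' := key a (Ne.symm nda) hda
  have hb' := key b (Ne.symm ndb) hdb
  have hc' := key c (Ne.symm ndc) hdc
  have hacb : ρ.r a * ρ.r c = ρ.r b := by rw [← hc, hsq']
  have hbca : ρ.r b * ρ.r c = ρ.r a := by rw [← hc, hcomm (ρ.r a) (ρ.r b), hsq']
  have hba : ¬ S.Collinear b a := fun hh => hab hh.symm'_s7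
  have hca : ¬ S.Collinear c a := fun hh => hac hh.symm'_s7
  have hcb : ¬ S.Collinear c b := fun hh => hbc hh.symm'_s7
  rcases ha' with hau | hav <;> rcases hb' with hbu | hbv <;> rcases hc' with hcu | hcv
  · exact core_contra S hGQ ρ hf hsq hcomm hab hac hbc hda hdb hdc nab nac nbc nda ndb ndc hc
      hau.symm'_s7 hbu.symm'_s7 hdu.symm'_s7
  · exact core_contra S hGQ ρ hf hsq hcomm hab hac hbc hda hdb hdc nab nac nbc nda ndb ndc hc
      hau.symm'_s7 hbu.symm'_s7 hdu.symm'_s7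
  · exact core_contra S hGQ ρ hf hsq hcomm hac hab hcb hda hdc hdb nac nab (Ne.symm nbc)
      nda ndc ndb hacb hau.symm'_s7 hcu.symm'_s7 hdu.symm'_s7
  · exact core_contra S hGQ ρ hf hsq hcomm hbc hba hca hdb hdc hda nbc (Ne.symm nab)
      (Ne.symm nac) ndb ndc nda hbca hbv.symm'_s7 hcv.symm'_s7 hdv.symm'_s7
  · exact core_contra S hGQ ρ hf hsq hcomm hbc hba hca hdb hdc hda nbc (Ne.symm nab)
      (Ne.symm nac) ndb ndc nda hbca hbu.symm'_s7 hcu.symm'_s7 hdu.symm'_s7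
  · exact core_contra S hGQ ρ hf hsq hcomm hac hab hcb hda hdc hdb nac nab (Ne.symm nbc)
      nda ndc ndb hacb hav.symm'_s7 hcv.symm'_s7 hdv.symm'_s7
  · exact core_contra S hGQ ρ hf hsq hcomm hab hac hbc hda hdb hdc nab nac nbc nda ndb ndc hc
      hav.symm'_s7 hbv.symm'_s7 hdv.symm'_s7
  · exact core_contra S hGQ ρ hf hsq hcomm hab hac hbc hda hdb hdc nab nac nbc nda ndb ndc hc
      hav.symm'_s7 hbv.symm'_s7 hdv.symm'_s7

end Final

/-- For a faithful representation of the `(2,2)`-GQ with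
`|R| = 2^4`, if `r_a r_b r_c = 1` for three distinct points `a, b, c`,
then `{a,b,c}` is a line or a complete 3-arc. -/
theorem gq22_triad_rel_line_or_arc {P : Type*} (S : SlimPLS P)
    (hGQ : S.IsGQ 2) {R : Type*} [Group R] (ρ : S.Rep R)
    (hf : Function.Injective ρ.r) (hcard : Nat.card R = 2 ^ 4)
    (a b c : P) (hab : a ≠ b) (hac : a ≠ c) (hbc : b ≠ c)
    (h : ρ.r a * ρ.r b * ρ.r c = 1) :
    (∃ l ∈ S.lines, (l : Set P) = {a, b, c}) ∨ S.Complete3Arc a b c := by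
  classical
  have hsurj := rep_surj S hGQ ρ hf hcard
  have hsq : ∀ g : R, g * g = 1 := by
    intro g
    by_cases hg : g = 1
    · rw [hg, one_mul]
    · obtain ⟨x, rfl⟩ := hsurj g hg
      exact rep_sq S ρ x
  have hinv : ∀ g : R, g⁻¹ = g := fun g => inv_eq_of_mul_eq_one_right (hsq g)
  have hcomm : ∀ g h : R, g * h = h * g := by
    intro g h
    calc g * h = (g * h)⁻¹ := (hinv _).symm
      _ = h⁻¹ * g⁻¹ := mul_inv_rev _ _
      _ = h * g := by rw [hinv, hinv]
  have hsq' : ∀ g h : R, g * (g * h) = h := fun g h => by rw [← mul_assoc, hsq, one_mul]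
  have hc : ρ.r a * ρ.r b = ρ.r c := by
    have h2 : ρ.r a * ρ.r b * (ρ.r c * ρ.r c) = ρ.r c := by
      rw [← mul_assoc, h, one_mul]
    rwa [hsq (ρ.r c), mul_one] at h2
  by_cases hcab : S.Collinear a b
  · obtain ⟨z, hz1, hz2, hl, hr⟩ := star_exists S ρ hcab
    have hz : z = c := hf (hr.symm.trans hc)
    subst hz
    exact Or.inl ⟨{a, b, z}, hl, by simp⟩
  by_cases hcac : S.Collinear a c
  · obtain ⟨z, hz1, hz2, hl, hr⟩ := star_exists S ρ hcac
    have hz : z = b := by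
      apply hf
      have h' : ρ.r z = ρ.r a * ρ.r c := hr.symm
      rw [h', ← hc, hsq']
    subst hz
    exact absurd (col_of_mem S hl (by simp) (by simp : z ∈ _) hab) hcab
  by_cases hcbc : S.Collinear b c
  · obtain ⟨z, hz1, hz2, hl, hr⟩ := star_exists S ρ hcbc
    have hz : z = a := by
      apply hf
      have h' : ρ.r z = ρ.r b * ρ.r c := hr.symm
      rw [h', ← hc, hcomm (ρ.r a) (ρ.r b), hsq']
    subst hz
    exact absurd (col_of_mem S hl (by simp : z ∈ _) (by simp) hab) hcab
  · right
    have hba : ¬ S.Collinear b a := fun hh => hcab hh.symm'_s7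
    have hca : ¬ S.Collinear c a := fun hh => hcac hh.symm'_s7
    have hcb : ¬ S.Collinear c b := fun hh => hcbc hh.symm'_s7
    refine ⟨hab, hac, hbc, ?_, ?_⟩
    · intro x hx y hy hxy
      simp only [Set.mem_insert_iff, Set.mem_singleton_iff] at hx hy
      rcases hx with rfl | rfl | rfl <;> rcases hy with rfl | rfl | rfl <;>
        first | exact absurd rfl hxy | assumption
    · intro d hd harc
      simp only [Set.mem_insert_iff, Set.mem_singleton_iff, not_or] at hd
      obtain ⟨hd1, hd2, hd3⟩ := hd
      have hda : ¬ S.Collinear d a := harc d (by simp) a (by simp) hd1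
      have hdb : ¬ S.Collinear d b := harc d (by simp) b (by simp) hd2
      have hdc : ¬ S.Collinear d c := harc d (by simp) c (by simp) hd3
      exact no_4arc S hGQ ρ hf hsq hcomm hcab hcac hcbc hda hdb hdc hab hac hbc hd1 hd2 hd3 hc
end
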